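/- arXiv:2502.13813 — 3 statements merged into one kernel-verified Lean document; each statement's English description precedes it below -/
import Mathlib

section
/- Assume I(Y;Ỹ) > 0. Then liminf_{n→∞} (n/log n)·P*_n ≥ 2·min{β, 1/I(Y;Ỹ)}. -/
open Filter Real

section

variable {𝒳 𝒴 : Type*} [Fintype 𝒳] [Fintype 𝒴] [Nonempty 𝒳] [Nonempty 𝒴]

/-- `p` is a probability mass function on a finite alphabet. -/
def IsPmf {α : Type*} [Fintype α] (p : α → ℝ) : Prop := (∀ a, 0 ≤ p a) ∧ ∑ a, p a = 1

/-- The output marginal `P_Y` of the source `PX` through the channel `W`. -/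
noncomputable def margY (PX : 𝒳 → ℝ) (W : 𝒳 → 𝒴 → ℝ) (y : 𝒴) : ℝ := ∑ x, PX x * W x y

/-- The joint pmf `P_{Y Ỹ}` of two independent noisy observations of the same source symbol. -/
noncomputable def jointYY (PX : 𝒳 → ℝ) (W : 𝒳 → 𝒴 → ℝ) (y y2 : 𝒴) : ℝ :=
  ∑ x, PX x * W x y * W x y2

/-- The likelihood ratio `λ(y, y2)`. -/
noncomputable def lam (PX : 𝒳 → ℝ) (W : 𝒳 → 𝒴 → ℝ) (y y2 : 𝒴) : ℝ :=
  if 0 < margY PX W y * margY PX W y2 then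
    jointYY PX W y y2 / (margY PX W y * margY PX W y2) else 0

/-- The mutual information `I(Y; Ỹ)`. -/
noncomputable def mutInf (PX : 𝒳 → ℝ) (W : 𝒳 → 𝒴 → ℝ) : ℝ :=
  ∑ y : 𝒴, ∑ y2 : 𝒴,
    if 0 < jointYY PX W y y2 then jointYY PX W y y2 * Real.log (lam PX W y y2) else 0

/-- Safe indexing into a tuple. -/
noncomputable def idx {α : Type*} [Nonempty α] {m : ℕ} (x : Fin m → α) (i : ℕ) : α :=
  if h : i < m then x ⟨i, h⟩ else Classical.arbitrary α

/-- Conditional law of the pair of reads given a positive overlap `s`: the reads are noisy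
observations (through `W`) of two length-`L` windows of an i.i.d. `PX`-sequence whose starting
points are `L - s` apart. -/
noncomputable def condPos (PX : 𝒳 → ℝ) (W : 𝒳 → 𝒴 → ℝ) (L s : ℕ)
    (y₁ y₂ : Fin L → 𝒴) : ℝ :=
  ∑ x : Fin (2 * L) → 𝒳,
    (∏ j, PX (x j)) *
      ((∏ i : Fin L, W (idx x (i : ℕ)) (y₁ i)) *
        (∏ i : Fin L, W (idx x (L - s + (i : ℕ))) (y₂ i)))

/-- Conditional law of the pair of reads given the overlap `t`. -/
noncomputable def condLik (PX : 𝒳 → ℝ) (W : 𝒳 → 𝒴 → ℝ) (L : ℕ) (t : ℤ)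
    (y₁ y₂ : Fin L → 𝒴) : ℝ :=
  if 1 ≤ t ∧ t ≤ (L : ℤ) then condPos PX W L t.toNat y₁ y₂
  else if 1 - (L : ℤ) ≤ t ∧ t ≤ -1 then condPos PX W L (-t).toNat y₂ y₁
  else if t = 0 then (∏ i, margY PX W (y₁ i)) * (∏ i, margY PX W (y₂ i))
  else 0

/-- The read length `ℓ(n) = ⌈β log n⌉`. -/
noncomputable def ell (β : ℝ) (n : ℕ) : ℕ := ⌈β * Real.log n⌉₊

/-- The prior pmf of the overlap `T`. -/
noncomputable def priorT (n L : ℕ) (t : ℤ) : ℝ :=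
  if t = 0 then ((n : ℝ) - (2 * (L : ℝ) - 1)) / n
  else if t ∈ Finset.Icc (1 - (L : ℤ)) ((L : ℤ)) then (n : ℝ)⁻¹
  else 0

/-- Bayesian error probability of the detector `That` in the noisy setting. -/
noncomputable def errProbN (PX : 𝒳 → ℝ) (W : 𝒳 → 𝒴 → ℝ) (n L : ℕ)
    (That : (Fin L → 𝒴) → (Fin L → 𝒴) → ℤ) : ℝ :=
  ∑ t ∈ Finset.Icc (1 - (L : ℤ)) ((L : ℤ)), ∑ y₁ : Fin L → 𝒴, ∑ y₂ : Fin L → 𝒴,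
    if That y₁ y₂ ≠ t then priorT n L t * condLik PX W L t y₁ y₂ else 0

/-- Minimal Bayesian error probability over all detectors with values in `𝒯`. -/
noncomputable def PstarN (PX : 𝒳 → ℝ) (W : 𝒳 → 𝒴 → ℝ) (β : ℝ) (n : ℕ) : ℝ :=
  sInf {e : ℝ | ∃ That : (Fin (ell β n) → 𝒴) → (Fin (ell β n) → 𝒴) → ℤ,
    (∀ y₁ y₂, That y₁ y₂ ∈ Finset.Icc (1 - (ell β n : ℤ)) ((ell β n : ℤ))) ∧
    e = errProbN PX W n (ell β n) That}

set_option linter.unusedSectionVars false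
set_option linter.unusedVariables false
set_option maxHeartbeats 2000000

-- ### basic facts

lemma idx_eq {α : Type*} [Nonempty α] {m : ℕ} (x : Fin m → α) (i : ℕ) (h : i < m) :
    idx x i = x ⟨i, h⟩ := dif_pos h

lemma margY_nonneg {PX : 𝒳 → ℝ} {W : 𝒳 → 𝒴 → ℝ} (hPX : IsPmf PX) (hW : ∀ x, IsPmf (W x))
    (y : 𝒴) : 0 ≤ margY PX W y :=
  Finset.sum_nonneg fun x _ => mul_nonneg (hPX.1 x) ((hW x).1 y)

lemma sum_margY {PX : 𝒳 → ℝ} {W : 𝒳 → 𝒴 → ℝ} (hPX : IsPmf PX) (hW : ∀ x, IsPmf (W x)) :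
    ∑ y, margY PX W y = 1 := by
  unfold margY
  rw [Finset.sum_comm]
  have : ∀ x, ∑ y, PX x * W x y = PX x := by
    intro x; rw [← Finset.mul_sum, (hW x).2, mul_one]
  simp_rw [this]; exact hPX.2

lemma jointYY_nonneg {PX : 𝒳 → ℝ} {W : 𝒳 → 𝒴 → ℝ} (hPX : IsPmf PX) (hW : ∀ x, IsPmf (W x))
    (y y2 : 𝒴) : 0 ≤ jointYY PX W y y2 :=
  Finset.sum_nonneg fun x _ => mul_nonneg (mul_nonneg (hPX.1 x) ((hW x).1 y)) ((hW x).1 y2)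

lemma sum_jointYY {PX : 𝒳 → ℝ} {W : 𝒳 → 𝒴 → ℝ} (hPX : IsPmf PX) (hW : ∀ x, IsPmf (W x)) :
    ∑ z : 𝒴 × 𝒴, jointYY PX W z.1 z.2 = 1 := by
  rw [Fintype.sum_prod_type]
  unfold jointYY
  have : ∀ y : 𝒴, ∑ y2 : 𝒴, ∑ x, PX x * W x y * W x y2 = ∑ x, PX x * W x y := by
    intro y; rw [Finset.sum_comm]
    refine Finset.sum_congr rfl fun x _ => ?_
    rw [← Finset.mul_sum, (hW x).2, mul_one]
  simp_rw [this]
  exact sum_margY hPX hW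

lemma margY_pos_of_jointYY_pos {PX : 𝒳 → ℝ} {W : 𝒳 → 𝒴 → ℝ} (hPX : IsPmf PX)
    (hW : ∀ x, IsPmf (W x)) {y y2 : 𝒴} (h : 0 < jointYY PX W y y2) :
    0 < margY PX W y * margY PX W y2 := by
  unfold jointYY at h
  have : ∃ x ∈ (Finset.univ : Finset 𝒳), 0 < PX x * W x y * W x y2 := by
    by_contra hc
    push_neg at hc
    have : jointYY PX W y y2 ≤ 0 := Finset.sum_nonpos fun x hx => hc x hx
    unfold jointYY at this; linarith
  obtain ⟨x, -, hx⟩ := this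
  have h1 : 0 < PX x * W x y := by
    rcases lt_or_ge 0 (PX x * W x y) with h' | h'
    · exact h'
    · exfalso; nlinarith [(hW x).1 y2]
  have h2 : 0 < PX x * W x y2 := by
    rcases lt_or_ge 0 (PX x * W x y2) with h' | h'
    · exact h'
    · exfalso; nlinarith [(hW x).1 y]
  have m1 : PX x * W x y ≤ margY PX W y :=
    Finset.single_le_sum (fun x' _ => mul_nonneg (hPX.1 x') ((hW x').1 y)) (Finset.mem_univ x)
  have m2 : PX x * W x y2 ≤ margY PX W y2 :=
    Finset.single_le_sum (fun x' _ => mul_nonneg (hPX.1 x') ((hW x').1 y2)) (Finset.mem_univ x)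
  exact mul_pos (lt_of_lt_of_le h1 m1) (lt_of_lt_of_le h2 m2)

lemma mutInf_eq {PX : 𝒳 → ℝ} {W : 𝒳 → 𝒴 → ℝ} (hPX : IsPmf PX) (hW : ∀ x, IsPmf (W x)) :
    mutInf PX W = ∑ z : 𝒴 × 𝒴, jointYY PX W z.1 z.2 * Real.log (lam PX W z.1 z.2) := by
  rw [Fintype.sum_prod_type]
  unfold mutInf
  refine Finset.sum_congr rfl fun y _ => Finset.sum_congr rfl fun y2 _ => ?_
  by_cases h : 0 < jointYY PX W y y2
  · rw [if_pos h]
  · rw [if_neg h]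
    have h0 : jointYY PX W y y2 = 0 :=
      le_antisymm (not_lt.1 h) (jointYY_nonneg hPX hW y y2)
    rw [h0, zero_mul]

-- ### H1 : sum of products factorizes

lemma sum_prod_idx {α : Type*} [Fintype α] [Nonempty α] (L : ℕ) (c : ℕ → α → ℝ) :
    ∑ v : Fin L → α, ∏ i ∈ Finset.range L, c i (idx v i)
      = ∏ i ∈ Finset.range L, ∑ a, c i a := by
  have h1 : ∀ v : Fin L → α, ∏ i ∈ Finset.range L, c i (idx v i)
      = ∏ i : Fin L, c i (v i) := by
    intro v
    rw [← Fin.prod_univ_eq_prod_range (fun i => c i (idx v i)) L]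
    refine Finset.prod_congr rfl fun i _ => ?_
    rw [idx_eq v i i.isLt]
  simp_rw [h1]
  rw [← Fin.prod_univ_eq_prod_range (fun i => ∑ a, c i a) L]
  rw [Finset.prod_univ_sum (fun _ : Fin L => (Finset.univ : Finset α)) (fun i a => c (i : ℕ) a)]
  rw [Fintype.piFinset_univ]

-- ## Lemma B: factorization of condPos
lemma condPos_eq (PX : 𝒳 → ℝ) (W : 𝒳 → 𝒴 → ℝ) (hPX : IsPmf PX) (hW : ∀ x, IsPmf (W x))
    (L s : ℕ) (hs : s ≤ L) (y₁ y₂ : Fin L → 𝒴) :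
    condPos PX W L s y₁ y₂ =
      (∏ j ∈ Finset.range (L - s), margY PX W (idx y₁ j)) *
      ((∏ i ∈ Finset.range s, jointYY PX W (idx y₁ (L - s + i)) (idx y₂ i)) *
       (∏ i ∈ Finset.range (L - s), margY PX W (idx y₂ (s + i)))) := by
  classical
  set g : ℕ → 𝒳 → ℝ := fun j a =>
    (PX a * (if j < L then W a (idx y₁ j) else 1)) *
    (if L - s ≤ j ∧ j < 2*L - s then W a (idx y₂ (j - (L - s))) else 1) with hg
  have step1 : ∀ x : Fin (2*L) → 𝒳,
      (∏ j, PX (x j)) *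
        ((∏ i : Fin L, W (idx x (i : ℕ)) (y₁ i)) *
          (∏ i : Fin L, W (idx x (L - s + (i : ℕ))) (y₂ i)))
      = ∏ j ∈ Finset.range (2*L), g j (idx x j) := by
    intro x
    have P1 : ∏ j ∈ Finset.range (2*L), PX (idx x j) = ∏ j : Fin (2*L), PX (x j) := by
      rw [← Fin.prod_univ_eq_prod_range (fun j => PX (idx x j)) (2*L)]
      exact Finset.prod_congr rfl fun i _ => by rw [idx_eq x i i.isLt]
    have P2 : ∏ j ∈ Finset.range (2*L),
        (if j < L then W (idx x j) (idx y₁ j) else 1)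
        = ∏ i : Fin L, W (idx x (i : ℕ)) (y₁ i) := by
      have h2 : Finset.range (2*L) = Finset.range (L + L) := by congr 1; omega
      rw [h2, Finset.prod_range_add]
      have e1 : ∏ j ∈ Finset.range L,
          (if L + j < L then W (idx x (L+j)) (idx y₁ (L+j)) else 1) = 1 :=
        Finset.prod_eq_one fun j _ => if_neg (by omega)
      rw [e1, mul_one]
      have e2 : ∀ i : Fin L, W (idx x (i : ℕ)) (y₁ i)
          = W (idx x (i : ℕ)) (idx y₁ (i : ℕ)) := fun i => by rw [idx_eq y₁ i i.isLt]
      simp_rw [e2]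
      rw [Fin.prod_univ_eq_prod_range (fun j => W (idx x j) (idx y₁ j)) L]
      exact Finset.prod_congr rfl fun j hj => if_pos (Finset.mem_range.1 hj)
    have P3 : ∏ j ∈ Finset.range (2*L),
        (if L - s ≤ j ∧ j < 2*L - s then W (idx x j) (idx y₂ (j - (L - s))) else 1)
        = ∏ i : Fin L, W (idx x (L - s + (i : ℕ))) (y₂ i) := by
      have h2 : Finset.range (2*L) = Finset.range ((L-s) + (L + s)) := by congr 1; omega
      rw [h2, Finset.prod_range_add, Finset.prod_range_add]
      have e1 : ∏ j ∈ Finset.range (L-s),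
          (if L - s ≤ j ∧ j < 2*L - s then W (idx x j) (idx y₂ (j - (L - s))) else 1) = 1 :=
        Finset.prod_eq_one fun j hj => if_neg (by
          rw [Finset.mem_range] at hj; omega)
      have e3 : ∏ j ∈ Finset.range s,
          (if L - s ≤ L - s + (L + j) ∧ L - s + (L + j) < 2*L - s then
            W (idx x (L - s + (L + j))) (idx y₂ (L - s + (L + j) - (L - s))) else 1) = 1 :=
        Finset.prod_eq_one fun j _ => if_neg (by omega)
      rw [e1, e3, one_mul, mul_one]
      have e2 : ∀ i : Fin L, W (idx x (L - s + (i : ℕ))) (y₂ i)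
          = W (idx x (L - s + (i : ℕ))) (idx y₂ (i : ℕ)) := fun i => by rw [idx_eq y₂ i i.isLt]
      simp_rw [e2]
      rw [Fin.prod_univ_eq_prod_range (fun j => W (idx x (L - s + j)) (idx y₂ j)) L]
      refine Finset.prod_congr rfl fun j hj => ?_
      rw [Finset.mem_range] at hj
      rw [if_pos (show L - s ≤ L - s + j ∧ L - s + j < 2*L - s by omega)]
      have : L - s + j - (L - s) = j := by omega
      rw [this]
    rw [← P1, ← P2, ← P3, hg]
    rw [← Finset.prod_mul_distrib, ← Finset.prod_mul_distrib]
    exact Finset.prod_congr rfl fun j _ => by ring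
  unfold condPos
  simp_rw [step1]
  rw [sum_prod_idx (2*L) g]
  -- now compute the product of the per-coordinate sums
  have h2L : Finset.range (2*L) = Finset.range ((L-s) + (s + ((L-s) + s))) := by congr 1; omega
  rw [h2L, Finset.prod_range_add, Finset.prod_range_add, Finset.prod_range_add]
  have E1 : ∏ j ∈ Finset.range (L-s), (∑ a, g j a)
      = ∏ j ∈ Finset.range (L - s), margY PX W (idx y₁ j) := by
    refine Finset.prod_congr rfl fun j hj => ?_
    rw [Finset.mem_range] at hj
    rw [hg]; simp only [margY]
    refine Finset.sum_congr rfl fun a _ => ?_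
    rw [if_pos (by omega : j < L), if_neg (by omega : ¬(L - s ≤ j ∧ j < 2*L - s)), mul_one]
  have E2 : ∏ j ∈ Finset.range s, (∑ a, g (L - s + j) a)
      = ∏ i ∈ Finset.range s, jointYY PX W (idx y₁ (L - s + i)) (idx y₂ i) := by
    refine Finset.prod_congr rfl fun j hj => ?_
    rw [Finset.mem_range] at hj
    rw [hg]; simp only [jointYY]
    refine Finset.sum_congr rfl fun a _ => ?_
    rw [if_pos (by omega : L - s + j < L),
      if_pos (show L - s ≤ L - s + j ∧ L - s + j < 2*L - s by omega)]
    have : L - s + j - (L - s) = j := by omega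
    rw [this]
  have E3 : ∏ j ∈ Finset.range (L-s), (∑ a, g (L - s + (s + j)) a)
      = ∏ i ∈ Finset.range (L - s), margY PX W (idx y₂ (s + i)) := by
    refine Finset.prod_congr rfl fun j hj => ?_
    rw [Finset.mem_range] at hj
    rw [hg]; simp only [margY]
    refine Finset.sum_congr rfl fun a _ => ?_
    rw [if_neg (by omega : ¬(L - s + (s + j) < L)),
      if_pos (show L - s ≤ L - s + (s + j) ∧ L - s + (s + j) < 2*L - s by omega), mul_one]
    have : L - s + (s + j) - (L - s) = s + j := by omega
    rw [this]
  have E4 : ∏ j ∈ Finset.range s, (∑ a, g (L - s + (s + ((L - s) + j))) a) = 1 := by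
    refine Finset.prod_eq_one fun j hj => ?_
    rw [hg]
    have : ∀ a : 𝒳, (PX a * (if L - s + (s + ((L - s) + j)) < L then
        W a (idx y₁ (L - s + (s + ((L - s) + j)))) else 1)) *
        (if L - s ≤ L - s + (s + ((L - s) + j)) ∧ L - s + (s + ((L - s) + j)) < 2*L - s then
          W a (idx y₂ (L - s + (s + ((L - s) + j)) - (L - s))) else 1) = PX a := by
      intro a
      rw [if_neg (by omega), if_neg (by omega), mul_one, mul_one]
    simp_rw [this]
    exact hPX.2
  rw [E1, E2, E3, E4, mul_one]

-- ## Lemma A: moments of functions of the overlap pairs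
lemma condPos_moment (PX : 𝒳 → ℝ) (W : 𝒳 → 𝒴 → ℝ) (hPX : IsPmf PX) (hW : ∀ x, IsPmf (W x))
    (sum_m : ∑ y, margY PX W y = 1)
    (L s : ℕ) (hs : s ≤ L) (g : ℕ → 𝒴 × 𝒴 → ℝ) :
    ∑ y₁ : Fin L → 𝒴, ∑ y₂ : Fin L → 𝒴, condPos PX W L s y₁ y₂ *
        ∏ i ∈ Finset.range s, g i (idx y₁ (L - s + i), idx y₂ i)
      = ∏ i ∈ Finset.range s, ∑ z : 𝒴 × 𝒴, jointYY PX W z.1 z.2 * g i z := by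
  classical
  set G1 : ℕ → 𝒴 → ℝ := fun i a => ∑ b, jointYY PX W a b * g i (a, b) with hG1
  have hrL1 : Finset.range L = Finset.range (s + (L - s)) := by congr 1; omega
  have hrL2 : Finset.range L = Finset.range ((L - s) + s) := by congr 1; omega
  have inner : ∀ y₁ : Fin L → 𝒴,
      ∑ y₂ : Fin L → 𝒴, condPos PX W L s y₁ y₂ *
        ∏ i ∈ Finset.range s, g i (idx y₁ (L - s + i), idx y₂ i)
      = (∏ j ∈ Finset.range (L - s), margY PX W (idx y₁ j)) *
        ∏ i ∈ Finset.range s, G1 i (idx y₁ (L - s + i)) := by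
    intro y₁
    set c : ℕ → 𝒴 → ℝ := fun i b =>
      if i < s then jointYY PX W (idx y₁ (L - s + i)) b * g i (idx y₁ (L - s + i), b)
      else margY PX W b with hc
    have rearr : ∀ y₂ : Fin L → 𝒴, condPos PX W L s y₁ y₂ *
        ∏ i ∈ Finset.range s, g i (idx y₁ (L - s + i), idx y₂ i)
        = (∏ j ∈ Finset.range (L - s), margY PX W (idx y₁ j)) *
          ∏ i ∈ Finset.range L, c i (idx y₂ i) := by
      intro y₂
      rw [condPos_eq PX W hPX hW L s hs y₁ y₂]
      have split : ∏ i ∈ Finset.range L, c i (idx y₂ i)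
          = (∏ i ∈ Finset.range s, jointYY PX W (idx y₁ (L - s + i)) (idx y₂ i)
                * g i (idx y₁ (L - s + i), idx y₂ i))
            * ∏ i ∈ Finset.range (L - s), margY PX W (idx y₂ (s + i)) := by
        rw [hrL1, Finset.prod_range_add]
        congr 1
        · refine Finset.prod_congr rfl fun i hi => ?_
          rw [Finset.mem_range] at hi
          rw [hc]; exact if_pos hi
        · refine Finset.prod_congr rfl fun i _ => ?_
          rw [hc]; exact if_neg (by omega)
      rw [split, Finset.prod_mul_distrib]
      ring
    simp_rw [rearr]
    rw [← Finset.mul_sum, sum_prod_idx L c]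
    congr 1
    rw [hrL1, Finset.prod_range_add]
    have p1 : ∏ i ∈ Finset.range s, (∑ b, c i b)
        = ∏ i ∈ Finset.range s, G1 i (idx y₁ (L - s + i)) := by
      refine Finset.prod_congr rfl fun i hi => ?_
      rw [Finset.mem_range] at hi
      rw [hG1]
      refine Finset.sum_congr rfl fun b _ => ?_
      rw [hc]; exact if_pos hi
    have p2 : ∏ i ∈ Finset.range (L - s), (∑ b, c (s + i) b) = 1 := by
      refine Finset.prod_eq_one fun i _ => ?_
      have : ∀ b, c (s + i) b = margY PX W b := fun b => by rw [hc]; exact if_neg (by omega)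
      simp_rw [this]
      exact sum_m
    rw [p1, p2, mul_one]
  simp_rw [inner]
  set c' : ℕ → 𝒴 → ℝ := fun j a =>
    if j < L - s then margY PX W a else G1 (j - (L - s)) a with hc'
  have rearr2 : ∀ y₁ : Fin L → 𝒴,
      (∏ j ∈ Finset.range (L - s), margY PX W (idx y₁ j)) *
        ∏ i ∈ Finset.range s, G1 i (idx y₁ (L - s + i))
      = ∏ j ∈ Finset.range L, c' j (idx y₁ j) := by
    intro y₁
    rw [hrL2, Finset.prod_range_add]
    congr 1
    · refine Finset.prod_congr rfl fun j hj => ?_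
      rw [Finset.mem_range] at hj
      rw [hc']; exact (if_pos hj).symm
    · refine Finset.prod_congr rfl fun i _ => ?_
      simp only [hc']
      rw [if_neg (by omega : ¬ (L - s + i < L - s))]
      have : L - s + i - (L - s) = i := by omega
      rw [this]
  simp_rw [rearr2]
  rw [sum_prod_idx L c']
  rw [hrL2, Finset.prod_range_add]
  have p1 : ∏ j ∈ Finset.range (L - s), (∑ a, c' j a) = 1 := by
    refine Finset.prod_eq_one fun j hj => ?_
    rw [Finset.mem_range] at hj
    have : ∀ a, c' j a = margY PX W a := fun a => by rw [hc']; exact if_pos hj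
    simp_rw [this]
    exact sum_m
  have p2 : ∏ i ∈ Finset.range s, (∑ a, c' (L - s + i) a)
      = ∏ i ∈ Finset.range s, ∑ z : 𝒴 × 𝒴, jointYY PX W z.1 z.2 * g i z := by
    refine Finset.prod_congr rfl fun i _ => ?_
    have h1 : ∀ a, c' (L - s + i) a = G1 i a := fun a => by
      simp only [hc']
      rw [if_neg (by omega : ¬ (L - s + i < L - s))]
      have : L - s + i - (L - s) = i := by omega
      rw [this]
    simp_rw [h1, hG1]
    rw [Fintype.sum_prod_type]
  rw [p1, p2, one_mul]

-- ## second moment identity (Chebyshev expectation)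
lemma cheb_exp (PX : 𝒳 → ℝ) (W : 𝒳 → 𝒴 → ℝ) (hPX : IsPmf PX) (hW : ∀ x, IsPmf (W x))
    (sum_m : ∑ y, margY PX W y = 1) (hq1 : ∑ z : 𝒴 × 𝒴, jointYY PX W z.1 z.2 = 1)
    (L s : ℕ) (hs : s ≤ L) (Z : 𝒴 × 𝒴 → ℝ) (I μ2 : ℝ)
    (hIdef : ∑ z : 𝒴 × 𝒴, jointYY PX W z.1 z.2 * Z z = I)
    (hμ2 : ∑ z : 𝒴 × 𝒴, jointYY PX W z.1 z.2 * (Z z)^2 = μ2) :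
    ∑ y₁ : Fin L → 𝒴, ∑ y₂ : Fin L → 𝒴, condPos PX W L s y₁ y₂ *
        ((∑ i ∈ Finset.range s, Z (idx y₁ (L - s + i), idx y₂ i)) - s * I)^2
      = s * μ2 - s * I^2 := by
  classical
  have S0 : ∑ y₁ : Fin L → 𝒴, ∑ y₂ : Fin L → 𝒴, condPos PX W L s y₁ y₂ = 1 := by
    have := condPos_moment PX W hPX hW sum_m L s hs (fun _ _ => 1)
    simp only [Finset.prod_const_one, mul_one] at this
    rw [this]
    simp [hq1]
  have S1 : ∀ i ∈ Finset.range s,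
      ∑ y₁ : Fin L → 𝒴, ∑ y₂ : Fin L → 𝒴, condPos PX W L s y₁ y₂ *
        Z (idx y₁ (L - s + i), idx y₂ i) = I := by
    intro i hi
    have hm := condPos_moment PX W hPX hW sum_m L s hs (fun k z => if i = k then Z z else 1)
    have hL : ∀ y₁ y₂ : Fin L → 𝒴,
        (∏ k ∈ Finset.range s, if i = k then Z (idx y₁ (L - s + k), idx y₂ k) else 1)
        = Z (idx y₁ (L - s + i), idx y₂ i) := by
      intro y₁ y₂
      rw [Finset.prod_ite_eq, if_pos hi]
    simp only [hL] at hm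
    have hR : (∏ k ∈ Finset.range s,
        ∑ z : 𝒴 × 𝒴, jointYY PX W z.1 z.2 * (if i = k then Z z else 1)) = I := by
      have : ∀ k, (∑ z : 𝒴 × 𝒴, jointYY PX W z.1 z.2 * (if i = k then Z z else 1))
          = if i = k then I else 1 := by
        intro k
        by_cases h : i = k
        · simp only [if_pos h]; exact hIdef
        · simp only [if_neg h, mul_one]; exact hq1
      simp only [this]
      rw [Finset.prod_ite_eq, if_pos hi]
    rw [hR] at hm
    exact hm
  have S2 : ∀ i ∈ Finset.range s, ∀ j ∈ Finset.range s,
      ∑ y₁ : Fin L → 𝒴, ∑ y₂ : Fin L → 𝒴, condPos PX W L s y₁ y₂ *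
        (Z (idx y₁ (L - s + i), idx y₂ i) * Z (idx y₁ (L - s + j), idx y₂ j))
      = if i = j then μ2 else I^2 := by
    intro i hi j hj
    have hm := condPos_moment PX W hPX hW sum_m L s hs
      (fun k z => (if i = k then Z z else 1) * (if j = k then Z z else 1))
    have hL : ∀ y₁ y₂ : Fin L → 𝒴,
        (∏ k ∈ Finset.range s, ((if i = k then Z (idx y₁ (L - s + k), idx y₂ k) else 1) *
          (if j = k then Z (idx y₁ (L - s + k), idx y₂ k) else 1)))
        = Z (idx y₁ (L - s + i), idx y₂ i) * Z (idx y₁ (L - s + j), idx y₂ j) := by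
      intro y₁ y₂
      rw [Finset.prod_mul_distrib, Finset.prod_ite_eq, Finset.prod_ite_eq,
        if_pos hi, if_pos hj]
    simp only [hL] at hm
    by_cases hij : i = j
    · subst hij
      have hR : (∏ k ∈ Finset.range s,
          ∑ z : 𝒴 × 𝒴, jointYY PX W z.1 z.2 * ((if i = k then Z z else 1) *
            (if i = k then Z z else 1))) = μ2 := by
        have : ∀ k, (∑ z : 𝒴 × 𝒴, jointYY PX W z.1 z.2 * ((if i = k then Z z else 1) *
            (if i = k then Z z else 1))) = if i = k then μ2 else 1 := by
          intro k
          by_cases h : i = k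
          · simp only [if_pos h, ← pow_two]
            exact hμ2
          · simp only [if_neg h, mul_one]; exact hq1
        simp only [this]
        rw [Finset.prod_ite_eq, if_pos hi]
      rw [hR] at hm
      rw [hm, if_pos rfl]
    · have hR : (∏ k ∈ Finset.range s,
          ∑ z : 𝒴 × 𝒴, jointYY PX W z.1 z.2 * ((if i = k then Z z else 1) *
            (if j = k then Z z else 1))) = I^2 := by
        have : ∀ k, (∑ z : 𝒴 × 𝒴, jointYY PX W z.1 z.2 * ((if i = k then Z z else 1) *
            (if j = k then Z z else 1)))
            = (if i = k then I else 1) * (if j = k then I else 1) := by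
          intro k
          by_cases h1 : i = k
          · have h2 : ¬ (j = k) := fun h => hij (h1.trans h.symm)
            simp only [if_pos h1, if_neg h2, mul_one]; exact hIdef
          · by_cases h2 : j = k
            · simp only [if_neg h1, if_pos h2, one_mul]; exact hIdef
            · simp only [if_neg h1, if_neg h2, mul_one]; exact hq1
        simp only [this]
        rw [Finset.prod_mul_distrib, Finset.prod_ite_eq, Finset.prod_ite_eq,
          if_pos hi, if_pos hj, pow_two]
      rw [hR] at hm
      rw [hm, if_neg hij]
  -- assemble
  have key2 : ∑ y₁ : Fin L → 𝒴, ∑ y₂ : Fin L → 𝒴, condPos PX W L s y₁ y₂ *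
      (∑ i ∈ Finset.range s, Z (idx y₁ (L - s + i), idx y₂ i))^2
      = s * μ2 + (s^2 - s) * I^2 := by
    have expand : ∀ y₁ y₂ : Fin L → 𝒴, condPos PX W L s y₁ y₂ *
        (∑ i ∈ Finset.range s, Z (idx y₁ (L - s + i), idx y₂ i))^2
        = ∑ i ∈ Finset.range s, ∑ j ∈ Finset.range s, condPos PX W L s y₁ y₂ *
            (Z (idx y₁ (L - s + i), idx y₂ i) * Z (idx y₁ (L - s + j), idx y₂ j)) := by
      intro y₁ y₂
      rw [pow_two, Finset.sum_mul_sum]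
      rw [Finset.mul_sum]
      exact Finset.sum_congr rfl fun i _ => by rw [Finset.mul_sum]
    simp_rw [expand]
    have swap1 : ∀ y₁ : Fin L → 𝒴,
        (∑ y₂ : Fin L → 𝒴, ∑ i ∈ Finset.range s, ∑ j ∈ Finset.range s,
          condPos PX W L s y₁ y₂ *
            (Z (idx y₁ (L - s + i), idx y₂ i) * Z (idx y₁ (L - s + j), idx y₂ j)))
        = ∑ i ∈ Finset.range s, ∑ j ∈ Finset.range s, ∑ y₂ : Fin L → 𝒴,
          condPos PX W L s y₁ y₂ *
            (Z (idx y₁ (L - s + i), idx y₂ i) * Z (idx y₁ (L - s + j), idx y₂ j)) := by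
      intro y₁
      rw [Finset.sum_comm]
      exact Finset.sum_congr rfl fun i _ => Finset.sum_comm
    simp_rw [swap1]
    rw [Finset.sum_comm]
    have swap2 : (∑ i ∈ Finset.range s, ∑ y₁ : Fin L → 𝒴, ∑ j ∈ Finset.range s,
          ∑ y₂ : Fin L → 𝒴, condPos PX W L s y₁ y₂ *
            (Z (idx y₁ (L - s + i), idx y₂ i) * Z (idx y₁ (L - s + j), idx y₂ j)))
        = ∑ i ∈ Finset.range s, ∑ j ∈ Finset.range s, ∑ y₁ : Fin L → 𝒴,
          ∑ y₂ : Fin L → 𝒴, condPos PX W L s y₁ y₂ *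
            (Z (idx y₁ (L - s + i), idx y₂ i) * Z (idx y₁ (L - s + j), idx y₂ j)) :=
      Finset.sum_congr rfl fun i _ => Finset.sum_comm
    rw [swap2]
    have apS2 : (∑ i ∈ Finset.range s, ∑ j ∈ Finset.range s, ∑ y₁ : Fin L → 𝒴,
          ∑ y₂ : Fin L → 𝒴, condPos PX W L s y₁ y₂ *
            (Z (idx y₁ (L - s + i), idx y₂ i) * Z (idx y₁ (L - s + j), idx y₂ j)))
        = ∑ i ∈ Finset.range s, ∑ j ∈ Finset.range s, (if i = j then μ2 else I^2) :=
      Finset.sum_congr rfl fun i hi => Finset.sum_congr rfl fun j hj => S2 i hi j hj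
    rw [apS2]
    have count : ∀ i ∈ Finset.range s,
        (∑ j ∈ Finset.range s, (if i = j then μ2 else I^2))
        = (s : ℝ) * I^2 + (μ2 - I^2) := by
      intro i hi
      have e : ∀ j, (if i = j then μ2 else I^2)
          = I^2 + (if i = j then μ2 - I^2 else 0) := by
        intro j; by_cases h : i = j <;> simp [h]
      simp_rw [e]
      rw [Finset.sum_add_distrib, Finset.sum_const, Finset.card_range,
        Finset.sum_ite_eq, if_pos hi, nsmul_eq_mul]
    rw [Finset.sum_congr rfl count, Finset.sum_const, Finset.card_range, nsmul_eq_mul]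
    ring
  have key1 : ∑ y₁ : Fin L → 𝒴, ∑ y₂ : Fin L → 𝒴, condPos PX W L s y₁ y₂ *
      (∑ i ∈ Finset.range s, Z (idx y₁ (L - s + i), idx y₂ i))
      = s * I := by
    have expand : ∀ y₁ y₂ : Fin L → 𝒴, condPos PX W L s y₁ y₂ *
        (∑ i ∈ Finset.range s, Z (idx y₁ (L - s + i), idx y₂ i))
        = ∑ i ∈ Finset.range s, condPos PX W L s y₁ y₂ *
            Z (idx y₁ (L - s + i), idx y₂ i) := fun y₁ y₂ => Finset.mul_sum _ _ _
    simp_rw [expand]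
    have swap1 : ∀ y₁ : Fin L → 𝒴,
        (∑ y₂ : Fin L → 𝒴, ∑ i ∈ Finset.range s, condPos PX W L s y₁ y₂ *
          Z (idx y₁ (L - s + i), idx y₂ i))
        = ∑ i ∈ Finset.range s, ∑ y₂ : Fin L → 𝒴, condPos PX W L s y₁ y₂ *
          Z (idx y₁ (L - s + i), idx y₂ i) := fun y₁ => Finset.sum_comm
    simp_rw [swap1]
    rw [Finset.sum_comm]
    rw [Finset.sum_congr rfl S1, Finset.sum_const, Finset.card_range, nsmul_eq_mul]
  have expand2 : ∀ y₁ y₂ : Fin L → 𝒴, condPos PX W L s y₁ y₂ *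
      ((∑ i ∈ Finset.range s, Z (idx y₁ (L - s + i), idx y₂ i)) - s * I)^2
      = condPos PX W L s y₁ y₂ *
          (∑ i ∈ Finset.range s, Z (idx y₁ (L - s + i), idx y₂ i))^2
        - (2 * (s * I)) * (condPos PX W L s y₁ y₂ *
          (∑ i ∈ Finset.range s, Z (idx y₁ (L - s + i), idx y₂ i)))
        + (s * I)^2 * condPos PX W L s y₁ y₂ := fun y₁ y₂ => by ring
  simp_rw [expand2, Finset.sum_add_distrib, Finset.sum_sub_distrib,
    ← Finset.mul_sum]
  rw [key2, key1, S0]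
  ring

-- ## mass of condPos
lemma sum_condPos (PX : 𝒳 → ℝ) (W : 𝒳 → 𝒴 → ℝ) (hPX : IsPmf PX) (hW : ∀ x, IsPmf (W x))
    (sum_m : ∑ y, margY PX W y = 1) (hq1 : ∑ z : 𝒴 × 𝒴, jointYY PX W z.1 z.2 = 1)
    (L s : ℕ) (hs : s ≤ L) :
    ∑ y₁ : Fin L → 𝒴, ∑ y₂ : Fin L → 𝒴, condPos PX W L s y₁ y₂ = 1 := by
  have := condPos_moment PX W hPX hW sum_m L s hs (fun _ _ => 1)
  simp only [Finset.prod_const_one, mul_one] at this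
  rw [this]
  simp [hq1]

lemma condPos_nonneg (PX : 𝒳 → ℝ) (W : 𝒳 → 𝒴 → ℝ) (hPX : IsPmf PX) (hW : ∀ x, IsPmf (W x))
    (L s : ℕ) (y₁ y₂ : Fin L → 𝒴) : 0 ≤ condPos PX W L s y₁ y₂ := by
  refine Finset.sum_nonneg fun x _ => ?_
  refine mul_nonneg (Finset.prod_nonneg fun j _ => hPX.1 _) ?_
  exact mul_nonneg (Finset.prod_nonneg fun i _ => (hW _).1 _)
    (Finset.prod_nonneg fun i _ => (hW _).1 _)

lemma prod_fin_split (L a b : ℕ) (h : L = a + b) (f : 𝒴 → ℝ) (y : Fin L → 𝒴) :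
    ∏ i : Fin L, f (y i)
      = (∏ j ∈ Finset.range a, f (idx y j)) * ∏ j ∈ Finset.range b, f (idx y (a + j)) := by
  have e : ∀ i : Fin L, f (y i) = f (idx y (i : ℕ)) := fun i => by rw [idx_eq y i i.isLt]
  simp_rw [e]
  rw [Fin.prod_univ_eq_prod_range (fun i => f (idx y i)) L]
  have hr : Finset.range L = Finset.range (a + b) := by rw [h]
  rw [hr, Finset.prod_range_add]

lemma pos_and_pos_of_mul_pos {a b : ℝ} (ha : 0 ≤ a) (h : 0 < a * b) : 0 < a ∧ 0 < b := by
  rcases mul_pos_iff.mp h with ⟨h1, h2⟩ | ⟨h1, h2⟩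
  · exact ⟨h1, h2⟩
  · exact absurd h1 (not_lt.mpr ha)

-- ## pointwise log-likelihood-ratio bound
lemma logLR_bound (PX : 𝒳 → ℝ) (W : 𝒳 → 𝒴 → ℝ) (hPX : IsPmf PX) (hW : ∀ x, IsPmf (W x))
    (L s : ℕ) (hs : s ≤ L) (c : ℝ) (hc : 0 < c) (y₁ y₂ : Fin L → 𝒴)
    (hpos : 0 < condPos PX W L s y₁ y₂)
    (hgt : c * ((∏ i, margY PX W (y₁ i)) * (∏ i, margY PX W (y₂ i)))
            < condPos PX W L s y₁ y₂) :
    Real.log c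
      < ∑ i ∈ Finset.range s, Real.log (lam PX W (idx y₁ (L - s + i)) (idx y₂ i)) := by
  classical
  set M1 := ∏ j ∈ Finset.range (L - s), margY PX W (idx y₁ j) with hM1
  set Q := ∏ i ∈ Finset.range s, jointYY PX W (idx y₁ (L - s + i)) (idx y₂ i) with hQ
  set M2 := ∏ i ∈ Finset.range (L - s), margY PX W (idx y₂ (s + i)) with hM2
  set T1 := ∏ i ∈ Finset.range s, margY PX W (idx y₁ (L - s + i)) with hT1
  set T2 := ∏ i ∈ Finset.range s, margY PX W (idx y₂ i) with hT2
  have hfact := condPos_eq PX W hPX hW L s hs y₁ y₂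
  rw [← hM1, ← hQ, ← hM2] at hfact
  have hy1 : (∏ i, margY PX W (y₁ i)) = M1 * T1 :=
    prod_fin_split L (L - s) s (by omega) (margY PX W) y₁
  have hy2 : (∏ i, margY PX W (y₂ i)) = T2 * M2 :=
    prod_fin_split L s (L - s) (by omega) (margY PX W) y₂
  have hM1n : 0 ≤ M1 := Finset.prod_nonneg fun j _ => margY_nonneg hPX hW _
  have hM2n : 0 ≤ M2 := Finset.prod_nonneg fun j _ => margY_nonneg hPX hW _
  have hQn : 0 ≤ Q := Finset.prod_nonneg fun j _ => jointYY_nonneg hPX hW _ _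
  rw [hfact] at hpos
  have hM1p : 0 < M1 := hM1n.lt_of_ne fun h0 => by
    rw [← h0, zero_mul] at hpos; exact lt_irrefl 0 hpos

  have hQM2p : 0 < Q * M2 := (mul_nonneg hQn hM2n).lt_of_ne fun h0 => by
    rw [← h0, mul_zero] at hpos; exact lt_irrefl 0 hpos
  have hQp : 0 < Q := hQn.lt_of_ne fun h0 => by
    rw [← h0, zero_mul] at hQM2p; exact lt_irrefl 0 hQM2p
  have hM2p : 0 < M2 := hM2n.lt_of_ne fun h0 => by
    rw [← h0, mul_zero] at hQM2p; exact lt_irrefl 0 hQM2p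
  have hqi : ∀ i ∈ Finset.range s, 0 < jointYY PX W (idx y₁ (L - s + i)) (idx y₂ i) := by
    intro i hi
    refine (jointYY_nonneg hPX hW _ _).lt_of_ne fun h0 => ?_
    rw [hQ] at hQp
    rw [Finset.prod_eq_zero hi h0.symm] at hQp
    exact lt_irrefl 0 hQp
  have hmm : ∀ i ∈ Finset.range s,
      0 < margY PX W (idx y₁ (L - s + i)) * margY PX W (idx y₂ i) :=
    fun i hi => margY_pos_of_jointYY_pos hPX hW (hqi i hi)
  have hlam : ∀ i ∈ Finset.range s,
      jointYY PX W (idx y₁ (L - s + i)) (idx y₂ i)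
        = lam PX W (idx y₁ (L - s + i)) (idx y₂ i) *
          (margY PX W (idx y₁ (L - s + i)) * margY PX W (idx y₂ i)) := by
    intro i hi
    unfold lam
    rw [if_pos (hmm i hi)]
    exact (div_mul_cancel₀ _ (ne_of_gt (hmm i hi))).symm
  have hlampos : ∀ i ∈ Finset.range s, 0 < lam PX W (idx y₁ (L - s + i)) (idx y₂ i) := by
    intro i hi
    unfold lam
    rw [if_pos (hmm i hi)]
    exact div_pos (hqi i hi) (hmm i hi)
  set P := ∏ i ∈ Finset.range s, lam PX W (idx y₁ (L - s + i)) (idx y₂ i) with hP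
  have hQfact : Q = P * (T1 * T2) := by
    rw [hQ, Finset.prod_congr rfl hlam, Finset.prod_mul_distrib, Finset.prod_mul_distrib]
  have hD : 0 < M1 * M2 * (T1 * T2) := by
    have hT1p : 0 < T1 := Finset.prod_pos fun i hi =>
      (pos_and_pos_of_mul_pos (margY_nonneg hPX hW _) (hmm i hi)).1
    have hT2p : 0 < T2 := Finset.prod_pos fun i hi =>
      (pos_and_pos_of_mul_pos (margY_nonneg hPX hW _) (hmm i hi)).2
    exact mul_pos (mul_pos hM1p hM2p) (mul_pos hT1p hT2p)
  have hcomp : c * (M1 * M2 * (T1 * T2)) < P * (M1 * M2 * (T1 * T2)) := by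
    have e1 : c * (M1 * M2 * (T1 * T2))
        = c * ((∏ i, margY PX W (y₁ i)) * (∏ i, margY PX W (y₂ i))) := by
      rw [hy1, hy2]; ring
    have e2 : P * (M1 * M2 * (T1 * T2)) = M1 * (Q * M2) := by
      rw [hQfact]; ring
    rw [e1, e2, ← hfact]; exact hgt
  have hcP : c < P := (mul_lt_mul_iff_of_pos_right hD).mp hcomp
  have := Real.log_lt_log hc hcP
  rwa [hP, Real.log_prod (fun i hi => ne_of_gt (hlampos i hi))] at this

-- ## Chebyshev tail bound
lemma cheb_tail (PX : 𝒳 → ℝ) (W : 𝒳 → 𝒴 → ℝ) (hPX : IsPmf PX) (hW : ∀ x, IsPmf (W x))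
    (sum_m : ∑ y, margY PX W y = 1) (hq1 : ∑ z : 𝒴 × 𝒴, jointYY PX W z.1 z.2 = 1)
    (L s : ℕ) (hs : s ≤ L) (I μ2 : ℝ)
    (hIdef : ∑ z : 𝒴 × 𝒴, jointYY PX W z.1 z.2 * Real.log (lam PX W z.1 z.2) = I)
    (hμ2 : ∑ z : 𝒴 × 𝒴, jointYY PX W z.1 z.2 * (Real.log (lam PX W z.1 z.2))^2 = μ2)
    (c : ℝ) (hc : 0 < c) (ha : (s : ℝ) * I < Real.log c) :
    ∑ y₁ : Fin L → 𝒴, ∑ y₂ : Fin L → 𝒴,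
      (if c * ((∏ i, margY PX W (y₁ i)) * (∏ i, margY PX W (y₂ i)))
          < condPos PX W L s y₁ y₂ then condPos PX W L s y₁ y₂ else 0)
      ≤ ((s : ℝ) * μ2 - s * I^2) / (Real.log c - s * I)^2 := by
  classical
  set Z : 𝒴 × 𝒴 → ℝ := fun z => Real.log (lam PX W z.1 z.2) with hZ
  set a := Real.log c - (s : ℝ) * I with haa
  have hap : 0 < a := by rw [haa]; linarith
  have pointwise : ∀ y₁ y₂ : Fin L → 𝒴,
      (if c * ((∏ i, margY PX W (y₁ i)) * (∏ i, margY PX W (y₂ i)))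
          < condPos PX W L s y₁ y₂ then condPos PX W L s y₁ y₂ else 0)
      ≤ condPos PX W L s y₁ y₂ *
          ((∑ i ∈ Finset.range s, Z (idx y₁ (L - s + i), idx y₂ i)) - s * I)^2 / a^2 := by
    intro y₁ y₂
    by_cases hcond : c * ((∏ i, margY PX W (y₁ i)) * (∏ i, margY PX W (y₂ i)))
        < condPos PX W L s y₁ y₂
    · rw [if_pos hcond]
      rcases eq_or_lt_of_le (condPos_nonneg PX W hPX hW L s y₁ y₂) with h0 | hpos
      · rw [← h0, zero_mul, zero_div]
      · have hlog := logLR_bound PX W hPX hW L s hs c hc y₁ y₂ hpos hcond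
        have hSa : a ≤ (∑ i ∈ Finset.range s, Z (idx y₁ (L - s + i), idx y₂ i)) - s * I := by
          rw [haa]
          have : (∑ i ∈ Finset.range s, Z (idx y₁ (L - s + i), idx y₂ i))
              = ∑ i ∈ Finset.range s, Real.log (lam PX W (idx y₁ (L - s + i)) (idx y₂ i)) := rfl
          rw [this]; linarith
        have hsq : a^2 ≤ ((∑ i ∈ Finset.range s, Z (idx y₁ (L - s + i), idx y₂ i)) - s * I)^2 := by
          have h1 : 0 ≤ a := le_of_lt hap
          nlinarith
        rw [le_div_iff₀ (by positivity : (0:ℝ) < a^2)]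
        exact mul_le_mul_of_nonneg_left hsq (le_of_lt hpos)
    · rw [if_neg hcond]
      exact div_nonneg (mul_nonneg (condPos_nonneg PX W hPX hW L s y₁ y₂) (sq_nonneg _))
        (sq_nonneg _)
  calc ∑ y₁ : Fin L → 𝒴, ∑ y₂ : Fin L → 𝒴,
      (if c * ((∏ i, margY PX W (y₁ i)) * (∏ i, margY PX W (y₂ i)))
          < condPos PX W L s y₁ y₂ then condPos PX W L s y₁ y₂ else 0)
      ≤ ∑ y₁ : Fin L → 𝒴, ∑ y₂ : Fin L → 𝒴, condPos PX W L s y₁ y₂ *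
          ((∑ i ∈ Finset.range s, Z (idx y₁ (L - s + i), idx y₂ i)) - s * I)^2 / a^2 :=
        Finset.sum_le_sum fun y₁ _ => Finset.sum_le_sum fun y₂ _ => pointwise y₁ y₂
    _ = (∑ y₁ : Fin L → 𝒴, ∑ y₂ : Fin L → 𝒴, condPos PX W L s y₁ y₂ *
          ((∑ i ∈ Finset.range s, Z (idx y₁ (L - s + i), idx y₂ i)) - s * I)^2) / a^2 := by
        simp_rw [← Finset.sum_div]
    _ = ((s : ℝ) * μ2 - s * I^2) / a^2 := by
        rw [cheb_exp PX W hPX hW sum_m hq1 L s hs Z I μ2 hIdef hμ2]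
    _ = ((s : ℝ) * μ2 - s * I^2) / (Real.log c - s * I)^2 := by rw [haa]


-- ## the min-sum lower bound machinery

lemma min_mul_left {r a b : ℝ} (hr : 0 ≤ r) : min (r*a) (r*b) = r * min a b := by
  rcases le_total a b with h | h
  · rw [min_eq_left h, min_eq_left (mul_le_mul_of_nonneg_left h hr)]
  · rw [min_eq_right h, min_eq_right (mul_le_mul_of_nonneg_left h hr)]

lemma sum_prod_margY (PX : 𝒳 → ℝ) (W : 𝒳 → 𝒴 → ℝ) (sum_m : ∑ y, margY PX W y = 1)
    (L : ℕ) : ∑ y : Fin L → 𝒴, ∏ i : Fin L, margY PX W (y i) = 1 := by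
  have h := Finset.prod_univ_sum (fun _ : Fin L => (Finset.univ : Finset 𝒴))
    (fun _ a => margY PX W a)
  rw [Fintype.piFinset_univ] at h
  rw [← h]
  simp [sum_m]

lemma condLik_pos_eq (PX : 𝒳 → ℝ) (W : 𝒳 → 𝒴 → ℝ) (L : ℕ) (t : ℤ) (h1 : 1 ≤ t)
    (h2 : t ≤ (L:ℤ)) (y₁ y₂ : Fin L → 𝒴) :
    condLik PX W L t y₁ y₂ = condPos PX W L t.toNat y₁ y₂ := by
  unfold condLik; rw [if_pos ⟨h1, h2⟩]

lemma condLik_neg_eq (PX : 𝒳 → ℝ) (W : 𝒳 → 𝒴 → ℝ) (L : ℕ) (t : ℤ) (h1 : 1 - (L:ℤ) ≤ t)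
    (h2 : t ≤ -1) (y₁ y₂ : Fin L → 𝒴) :
    condLik PX W L t y₁ y₂ = condPos PX W L (-t).toNat y₂ y₁ := by
  unfold condLik; rw [if_neg (by omega), if_pos ⟨h1, h2⟩]

lemma condLik_zero_eq (PX : 𝒳 → ℝ) (W : 𝒳 → 𝒴 → ℝ) (L : ℕ) (y₁ y₂ : Fin L → 𝒴) :
    condLik PX W L 0 y₁ y₂
      = (∏ i, margY PX W (y₁ i)) * (∏ i, margY PX W (y₂ i)) := by
  unfold condLik
  rw [if_neg (by omega), if_neg (by omega), if_pos rfl]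

lemma condLik_nonneg (PX : 𝒳 → ℝ) (W : 𝒳 → 𝒴 → ℝ) (hPX : IsPmf PX) (hW : ∀ x, IsPmf (W x))
    (L : ℕ) (t : ℤ) (y₁ y₂ : Fin L → 𝒴) : 0 ≤ condLik PX W L t y₁ y₂ := by
  unfold condLik
  split_ifs
  · exact condPos_nonneg PX W hPX hW _ _ _ _
  · exact condPos_nonneg PX W hPX hW _ _ _ _
  · exact mul_nonneg (Finset.prod_nonneg fun i _ => margY_nonneg hPX hW _)
      (Finset.prod_nonneg fun i _ => margY_nonneg hPX hW _)
  · exact le_refl 0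

lemma priorT_nonneg (n L : ℕ) (hc : 0 ≤ (n : ℝ) - (2 * (L:ℝ) - 1)) (t : ℤ) :
    0 ≤ priorT n L t := by
  unfold priorT
  split_ifs
  · exact div_nonneg hc (Nat.cast_nonneg n)
  · exact inv_nonneg.mpr (Nat.cast_nonneg n)
  · exact le_refl 0

lemma sum_condLik (PX : 𝒳 → ℝ) (W : 𝒳 → 𝒴 → ℝ) (hPX : IsPmf PX) (hW : ∀ x, IsPmf (W x))
    (sum_m : ∑ y, margY PX W y = 1) (hq1 : ∑ z : 𝒴 × 𝒴, jointYY PX W z.1 z.2 = 1)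
    (L : ℕ) (t : ℤ) (ht : t ∈ Finset.Icc (1 - (L:ℤ)) (L:ℤ)) :
    ∑ y₁ : Fin L → 𝒴, ∑ y₂ : Fin L → 𝒴, condLik PX W L t y₁ y₂ = 1 := by
  rw [Finset.mem_Icc] at ht
  rcases lt_trichotomy t 0 with hneg | hzero | hpos
  · have e := condLik_neg_eq PX W L t (by omega) (by omega)
    simp_rw [e]
    rw [Finset.sum_comm]
    exact sum_condPos PX W hPX hW sum_m hq1 L (-t).toNat (by omega)
  · subst hzero
    have e := condLik_zero_eq PX W L
    simp_rw [e, ← Finset.mul_sum]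
    rw [sum_prod_margY PX W sum_m L]
    simp_rw [mul_one]
    exact sum_prod_margY PX W sum_m L
  · have e := condLik_pos_eq PX W L t (by omega) (by omega)
    simp_rw [e]
    exact sum_condPos PX W hPX hW sum_m hq1 L t.toNat (by omega)

-- key finset inequality: error mass at a point dominates sum of mins
lemma minsum_le (S : Finset ℤ) (w : ℤ → ℝ) (hw : ∀ t ∈ S, 0 ≤ w t) (h0 : (0:ℤ) ∈ S)
    (th : ℤ) :
    ∑ t ∈ S.erase 0, min (w t) (w 0) ≤ ∑ t ∈ S, (if th ≠ t then w t else 0) := by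
  classical
  have pointwise : ∀ t, (if th ≠ t then w t else 0) = w t - (if th = t then w t else 0) := by
    intro t; by_cases h : th = t <;> simp [h]
  simp_rw [pointwise]
  rw [Finset.sum_sub_distrib, Finset.sum_ite_eq]
  by_cases hthS : th ∈ S
  · rw [if_pos hthS]
    by_cases hth0 : th = 0
    · subst hth0
      rw [← Finset.sum_erase_eq_sub h0]
      exact Finset.sum_le_sum fun t _ => min_le_left _ _
    · have hthS0 : th ∈ S.erase 0 := Finset.mem_erase.mpr ⟨hth0, hthS⟩
      rw [← Finset.sum_erase_eq_sub hthS]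
      rw [← Finset.add_sum_erase _ _ hthS0]
      have h0' : (0:ℤ) ∈ S.erase th := Finset.mem_erase.mpr ⟨fun h => hth0 h.symm, h0⟩
      rw [← Finset.add_sum_erase _ w h0']
      rw [show ((S.erase th).erase 0) = ((S.erase 0).erase th) from Finset.erase_right_comm]
      exact add_le_add (min_le_right _ _) (Finset.sum_le_sum fun t _ => min_le_left _ _)
  · rw [if_neg hthS, sub_zero]
    calc ∑ t ∈ S.erase 0, min (w t) (w 0) ≤ ∑ t ∈ S.erase 0, w t :=
        Finset.sum_le_sum fun t _ => min_le_left _ _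
      _ ≤ ∑ t ∈ S, w t := Finset.sum_le_sum_of_subset_of_nonneg (Finset.erase_subset _ _)
          (fun t ht _ => hw t ht)

lemma errProb_ge_minsum (PX : 𝒳 → ℝ) (W : 𝒳 → 𝒴 → ℝ) (hPX : IsPmf PX) (hW : ∀ x, IsPmf (W x))
    (n L : ℕ) (hL : 1 ≤ L) (hc : 0 ≤ (n : ℝ) - (2 * (L:ℝ) - 1))
    (That : (Fin L → 𝒴) → (Fin L → 𝒴) → ℤ) :
    ∑ t ∈ (Finset.Icc (1 - (L:ℤ)) (L:ℤ)).erase 0, ∑ y₁ : Fin L → 𝒴, ∑ y₂ : Fin L → 𝒴,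
        min (priorT n L t * condLik PX W L t y₁ y₂)
            (priorT n L 0 * condLik PX W L 0 y₁ y₂)
      ≤ errProbN PX W n L That := by
  classical
  have h0 : (0:ℤ) ∈ Finset.Icc (1 - (L:ℤ)) (L:ℤ) := Finset.mem_Icc.mpr (by omega)
  have swapL : ∑ t ∈ (Finset.Icc (1 - (L:ℤ)) (L:ℤ)).erase 0, ∑ y₁ : Fin L → 𝒴,
        ∑ y₂ : Fin L → 𝒴, min (priorT n L t * condLik PX W L t y₁ y₂)
          (priorT n L 0 * condLik PX W L 0 y₁ y₂)
      = ∑ y₁ : Fin L → 𝒴, ∑ y₂ : Fin L → 𝒴,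
          ∑ t ∈ (Finset.Icc (1 - (L:ℤ)) (L:ℤ)).erase 0,
            min (priorT n L t * condLik PX W L t y₁ y₂)
              (priorT n L 0 * condLik PX W L 0 y₁ y₂) := by
    rw [Finset.sum_comm]
    exact Finset.sum_congr rfl fun y₁ _ => Finset.sum_comm
  have swapR : errProbN PX W n L That
      = ∑ y₁ : Fin L → 𝒴, ∑ y₂ : Fin L → 𝒴, ∑ t ∈ Finset.Icc (1 - (L:ℤ)) (L:ℤ),
          (if That y₁ y₂ ≠ t then priorT n L t * condLik PX W L t y₁ y₂ else 0) := by
    unfold errProbN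
    rw [Finset.sum_comm]
    exact Finset.sum_congr rfl fun y₁ _ => Finset.sum_comm
  rw [swapL, swapR]
  refine Finset.sum_le_sum fun y₁ _ => Finset.sum_le_sum fun y₂ _ => ?_
  exact minsum_le _ _ (fun t _ => mul_nonneg (priorT_nonneg n L hc t)
    (condLik_nonneg PX W hPX hW L t y₁ y₂)) h0 (That y₁ y₂)

-- per-overlap lower bound on the min sum
lemma sum_min_ge (PX : 𝒳 → ℝ) (W : 𝒳 → 𝒴 → ℝ) (hPX : IsPmf PX) (hW : ∀ x, IsPmf (W x))
    (sum_m : ∑ y, margY PX W y = 1) (hq1 : ∑ z : 𝒴 × 𝒴, jointYY PX W z.1 z.2 = 1)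
    (L s : ℕ) (hs : s ≤ L) (I μ2 : ℝ)
    (hIdef : ∑ z : 𝒴 × 𝒴, jointYY PX W z.1 z.2 * Real.log (lam PX W z.1 z.2) = I)
    (hμ2 : ∑ z : 𝒴 × 𝒴, jointYY PX W z.1 z.2 * (Real.log (lam PX W z.1 z.2))^2 = μ2)
    (c : ℝ) (hc : 0 < c) (ha : (s : ℝ) * I < Real.log c) :
    1 - ((s:ℝ) * μ2 - s * I^2) / (Real.log c - s * I)^2
      ≤ ∑ y₁ : Fin L → 𝒴, ∑ y₂ : Fin L → 𝒴,
          min (condPos PX W L s y₁ y₂)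
            (c * ((∏ i, margY PX W (y₁ i)) * (∏ i, margY PX W (y₂ i)))) := by
  classical
  have tail := cheb_tail PX W hPX hW sum_m hq1 L s hs I μ2 hIdef hμ2 c hc ha
  have mass := sum_condPos PX W hPX hW sum_m hq1 L s hs
  have pointwise : ∀ y₁ y₂ : Fin L → 𝒴,
      condPos PX W L s y₁ y₂ -
        (if c * ((∏ i, margY PX W (y₁ i)) * (∏ i, margY PX W (y₂ i)))
            < condPos PX W L s y₁ y₂ then condPos PX W L s y₁ y₂ else 0)
      ≤ min (condPos PX W L s y₁ y₂)
          (c * ((∏ i, margY PX W (y₁ i)) * (∏ i, margY PX W (y₂ i)))) := by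
    intro y₁ y₂
    by_cases h : c * ((∏ i, margY PX W (y₁ i)) * (∏ i, margY PX W (y₂ i)))
        < condPos PX W L s y₁ y₂
    · rw [if_pos h, sub_self]
      exact le_min (condPos_nonneg PX W hPX hW L s y₁ y₂)
        (mul_nonneg hc.le (mul_nonneg
          (Finset.prod_nonneg fun i _ => margY_nonneg hPX hW _)
          (Finset.prod_nonneg fun i _ => margY_nonneg hPX hW _)))
    · rw [if_neg h, sub_zero]
      exact le_min (le_refl _) (not_lt.mp h)
  have expand : (∑ y₁ : Fin L → 𝒴, ∑ y₂ : Fin L → 𝒴,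
        (condPos PX W L s y₁ y₂ -
          (if c * ((∏ i, margY PX W (y₁ i)) * (∏ i, margY PX W (y₂ i)))
              < condPos PX W L s y₁ y₂ then condPos PX W L s y₁ y₂ else 0)))
      = (∑ y₁ : Fin L → 𝒴, ∑ y₂ : Fin L → 𝒴, condPos PX W L s y₁ y₂)
        - ∑ y₁ : Fin L → 𝒴, ∑ y₂ : Fin L → 𝒴,
            (if c * ((∏ i, margY PX W (y₁ i)) * (∏ i, margY PX W (y₂ i)))
                < condPos PX W L s y₁ y₂ then condPos PX W L s y₁ y₂ else 0) := by
    simp_rw [Finset.sum_sub_distrib]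
  calc 1 - ((s:ℝ) * μ2 - s * I^2) / (Real.log c - s * I)^2
      ≤ (∑ y₁ : Fin L → 𝒴, ∑ y₂ : Fin L → 𝒴, condPos PX W L s y₁ y₂)
        - ∑ y₁ : Fin L → 𝒴, ∑ y₂ : Fin L → 𝒴,
            (if c * ((∏ i, margY PX W (y₁ i)) * (∏ i, margY PX W (y₂ i)))
                < condPos PX W L s y₁ y₂ then condPos PX W L s y₁ y₂ else 0) := by
        rw [mass]; linarith
    _ = _ := expand.symm
    _ ≤ ∑ y₁ : Fin L → 𝒴, ∑ y₂ : Fin L → 𝒴,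
          min (condPos PX W L s y₁ y₂)
            (c * ((∏ i, margY PX W (y₁ i)) * (∏ i, margY PX W (y₂ i)))) :=
        Finset.sum_le_sum fun y₁ _ => Finset.sum_le_sum fun y₂ _ => pointwise y₁ y₂

lemma Gmin_bound (PX : 𝒳 → ℝ) (W : 𝒳 → 𝒴 → ℝ) (hPX : IsPmf PX) (hW : ∀ x, IsPmf (W x))
    (sum_m : ∑ y, margY PX W y = 1) (hq1 : ∑ z : 𝒴 × 𝒴, jointYY PX W z.1 z.2 = 1)
    (I μ2 : ℝ)
    (hIdef : ∑ z : 𝒴 × 𝒴, jointYY PX W z.1 z.2 * Real.log (lam PX W z.1 z.2) = I)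
    (hμ2 : ∑ z : 𝒴 × 𝒴, jointYY PX W z.1 z.2 * (Real.log (lam PX W z.1 z.2))^2 = μ2)
    (n L : ℕ) (t : ℤ) (ht : t ∈ (Finset.Icc (1 - (L:ℤ)) (L:ℤ)).erase 0)
    (hc : 0 < (n : ℝ) - (2 * (L:ℝ) - 1))
    (ha : (t.natAbs : ℝ) * I < Real.log ((n : ℝ) - (2 * (L:ℝ) - 1))) :
    ((n:ℝ))⁻¹ * (1 - ((t.natAbs : ℝ) * μ2 - t.natAbs * I^2) /
        (Real.log ((n : ℝ) - (2 * (L:ℝ) - 1)) - t.natAbs * I)^2)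
      ≤ ∑ y₁ : Fin L → 𝒴, ∑ y₂ : Fin L → 𝒴,
          min (priorT n L t * condLik PX W L t y₁ y₂)
              (priorT n L 0 * condLik PX W L 0 y₁ y₂) := by
  classical
  obtain ⟨ht0, htI'⟩ := Finset.mem_erase.mp ht
  have htI := Finset.mem_Icc.mp htI'
  have hsL : t.natAbs ≤ L := by omega
  have hp1 : priorT n L t = (n:ℝ)⁻¹ := by
    unfold priorT
    rw [if_neg ht0, if_pos htI']
  have hp0 : priorT n L 0 = (n:ℝ)⁻¹ * ((n : ℝ) - (2 * (L:ℝ) - 1)) := by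
    unfold priorT
    rw [if_pos rfl, div_eq_inv_mul]
  have hinv : (0:ℝ) ≤ (n:ℝ)⁻¹ := inv_nonneg.mpr (Nat.cast_nonneg n)
  have main := sum_min_ge PX W hPX hW sum_m hq1 L t.natAbs hsL I μ2 hIdef hμ2
    ((n : ℝ) - (2 * (L:ℝ) - 1)) hc ha
  have main' : ((n:ℝ))⁻¹ * (1 - ((t.natAbs : ℝ) * μ2 - t.natAbs * I^2) /
        (Real.log ((n : ℝ) - (2 * (L:ℝ) - 1)) - t.natAbs * I)^2)
      ≤ ∑ y₁ : Fin L → 𝒴, ∑ y₂ : Fin L → 𝒴, (n:ℝ)⁻¹ *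
          min (condPos PX W L t.natAbs y₁ y₂)
            (((n : ℝ) - (2 * (L:ℝ) - 1)) *
              ((∏ i, margY PX W (y₁ i)) * (∏ i, margY PX W (y₂ i)))) := by
    simp_rw [← Finset.mul_sum]
    exact mul_le_mul_of_nonneg_left main hinv
  rcases lt_or_gt_of_ne (fun h => ht0 h : t ≠ 0) with hneg | hpos
  · have e := condLik_neg_eq PX W L t (by omega) (by omega)
    have hts : (-t).toNat = t.natAbs := by omega
    have pointeq : ∀ y₁ y₂ : Fin L → 𝒴,
        min (priorT n L t * condLik PX W L t y₁ y₂)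
            (priorT n L 0 * condLik PX W L 0 y₁ y₂)
        = (n:ℝ)⁻¹ * min (condPos PX W L t.natAbs y₂ y₁)
            (((n : ℝ) - (2 * (L:ℝ) - 1)) *
              ((∏ i, margY PX W (y₁ i)) * (∏ i, margY PX W (y₂ i)))) := by
      intro y₁ y₂
      rw [hp1, hp0, e, hts, condLik_zero_eq, mul_assoc, min_mul_left hinv]
    simp_rw [pointeq]
    rw [Finset.sum_comm]
    have flip : ∀ y₂ y₁ : Fin L → 𝒴,
        (n:ℝ)⁻¹ * min (condPos PX W L t.natAbs y₂ y₁)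
          (((n : ℝ) - (2 * (L:ℝ) - 1)) *
            ((∏ i, margY PX W (y₁ i)) * (∏ i, margY PX W (y₂ i))))
        = (n:ℝ)⁻¹ * min (condPos PX W L t.natAbs y₂ y₁)
          (((n : ℝ) - (2 * (L:ℝ) - 1)) *
            ((∏ i, margY PX W (y₂ i)) * (∏ i, margY PX W (y₁ i)))) := by
      intro y₂ y₁
      rw [mul_comm (∏ i, margY PX W (y₁ i)) (∏ i, margY PX W (y₂ i))]
    simp_rw [flip]
    exact main'
  · have e := condLik_pos_eq PX W L t (by omega) (by omega)
    have hts : t.toNat = t.natAbs := by omega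
    have pointeq : ∀ y₁ y₂ : Fin L → 𝒴,
        min (priorT n L t * condLik PX W L t y₁ y₂)
            (priorT n L 0 * condLik PX W L 0 y₁ y₂)
        = (n:ℝ)⁻¹ * min (condPos PX W L t.natAbs y₁ y₂)
            (((n : ℝ) - (2 * (L:ℝ) - 1)) *
              ((∏ i, margY PX W (y₁ i)) * (∏ i, margY PX W (y₂ i)))) := by
      intro y₁ y₂
      rw [hp1, hp0, e, hts, condLik_zero_eq, mul_assoc, min_mul_left hinv]
    simp_rw [pointeq]
    exact main'


-- ## assembled per-n bounds

lemma errProbN_nonneg (PX : 𝒳 → ℝ) (W : 𝒳 → 𝒴 → ℝ) (hPX : IsPmf PX) (hW : ∀ x, IsPmf (W x))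
    (n L : ℕ) (hc : 0 ≤ (n : ℝ) - (2 * (L:ℝ) - 1))
    (That : (Fin L → 𝒴) → (Fin L → 𝒴) → ℤ) : 0 ≤ errProbN PX W n L That := by
  refine Finset.sum_nonneg fun t _ => Finset.sum_nonneg fun y₁ _ =>
    Finset.sum_nonneg fun y₂ _ => ?_
  by_cases h : That y₁ y₂ ≠ t
  · rw [if_pos h]
    exact mul_nonneg (priorT_nonneg n L hc t) (condLik_nonneg PX W hPX hW L t y₁ y₂)
  · rw [if_neg h]

lemma errProb_lower (PX : 𝒳 → ℝ) (W : 𝒳 → 𝒴 → ℝ) (hPX : IsPmf PX) (hW : ∀ x, IsPmf (W x))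
    (sum_m : ∑ y, margY PX W y = 1) (hq1 : ∑ z : 𝒴 × 𝒴, jointYY PX W z.1 z.2 = 1)
    (I μ2 : ℝ)
    (hIdef : ∑ z : 𝒴 × 𝒴, jointYY PX W z.1 z.2 * Real.log (lam PX W z.1 z.2) = I)
    (hμ2 : ∑ z : 𝒴 × 𝒴, jointYY PX W z.1 z.2 * (Real.log (lam PX W z.1 z.2))^2 = μ2)
    (n L D : ℕ) (hL : 1 ≤ L) (hD : (D : ℤ) ≤ (L:ℤ) - 1)
    (hc : 0 < (n : ℝ) - (2 * (L:ℝ) - 1))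
    (b : ℝ)
    (ha : ∀ s : ℕ, 1 ≤ s → s ≤ D → (s:ℝ) * I < Real.log ((n:ℝ) - (2*(L:ℝ)-1)))
    (hb : ∀ s : ℕ, 1 ≤ s → s ≤ D →
      ((s:ℝ)*μ2 - s*I^2)/(Real.log ((n:ℝ)-(2*(L:ℝ)-1)) - s*I)^2 ≤ b)
    (That : (Fin L → 𝒴) → (Fin L → 𝒴) → ℤ) :
    (2*(D:ℝ)/n) * (1 - b) ≤ errProbN PX W n L That := by
  classical
  have base := errProb_ge_minsum PX W hPX hW n L hL hc.le That
  set Dset := (Finset.Icc (-(D:ℤ)) (D:ℤ)).erase 0 with hDset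
  have hsub : Dset ⊆ (Finset.Icc (1 - (L:ℤ)) (L:ℤ)).erase 0 := by
    intro t htmem
    rw [hDset, Finset.mem_erase, Finset.mem_Icc] at htmem
    rw [Finset.mem_erase, Finset.mem_Icc]
    omega
  have hGnonneg : ∀ t, 0 ≤ ∑ y₁ : Fin L → 𝒴, ∑ y₂ : Fin L → 𝒴,
      min (priorT n L t * condLik PX W L t y₁ y₂)
          (priorT n L 0 * condLik PX W L 0 y₁ y₂) := by
    intro t
    refine Finset.sum_nonneg fun y₁ _ => Finset.sum_nonneg fun y₂ _ => le_min ?_ ?_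
    · exact mul_nonneg (priorT_nonneg n L hc.le t) (condLik_nonneg PX W hPX hW L t y₁ y₂)
    · exact mul_nonneg (priorT_nonneg n L hc.le 0) (condLik_nonneg PX W hPX hW L 0 y₁ y₂)
  have hcard : Dset.card = 2 * D := by
    rw [hDset, Finset.card_erase_of_mem (Finset.mem_Icc.mpr (by omega)), Int.card_Icc]
    omega
  have step2 : ∀ t ∈ Dset, (n:ℝ)⁻¹ * (1 - b) ≤ ∑ y₁ : Fin L → 𝒴, ∑ y₂ : Fin L → 𝒴,
      min (priorT n L t * condLik PX W L t y₁ y₂)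
          (priorT n L 0 * condLik PX W L 0 y₁ y₂) := by
    intro t ht
    have htD : t ≠ 0 ∧ -(D:ℤ) ≤ t ∧ t ≤ D := by
      have := ht; rw [hDset, Finset.mem_erase, Finset.mem_Icc] at this; tauto
    have hs1 : 1 ≤ t.natAbs := by omega
    have hsD : t.natAbs ≤ D := by omega
    have h1 := Gmin_bound PX W hPX hW sum_m hq1 I μ2 hIdef hμ2 n L t (hsub ht) hc
      (ha t.natAbs hs1 hsD)
    refine le_trans ?_ h1
    have hinv : (0:ℝ) ≤ (n:ℝ)⁻¹ := inv_nonneg.mpr (Nat.cast_nonneg n)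
    have := hb t.natAbs hs1 hsD
    exact mul_le_mul_of_nonneg_left (by linarith) hinv
  calc (2*(D:ℝ)/n) * (1 - b) = (Dset.card : ℝ) * ((n:ℝ)⁻¹ * (1 - b)) := by
        rw [hcard]; push_cast; ring
    _ ≤ ∑ t ∈ Dset, ∑ y₁ : Fin L → 𝒴, ∑ y₂ : Fin L → 𝒴,
          min (priorT n L t * condLik PX W L t y₁ y₂)
              (priorT n L 0 * condLik PX W L 0 y₁ y₂) := by
        have := Finset.card_nsmul_le_sum Dset _ _ step2
        rwa [nsmul_eq_mul] at this
    _ ≤ ∑ t ∈ (Finset.Icc (1 - (L:ℤ)) (L:ℤ)).erase 0, ∑ y₁ : Fin L → 𝒴,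
          ∑ y₂ : Fin L → 𝒴,
          min (priorT n L t * condLik PX W L t y₁ y₂)
              (priorT n L 0 * condLik PX W L 0 y₁ y₂) :=
        Finset.sum_le_sum_of_subset_of_nonneg hsub (fun t _ _ => hGnonneg t)
    _ ≤ errProbN PX W n L That := base

lemma PstarN_ge (PX : 𝒳 → ℝ) (W : 𝒳 → 𝒴 → ℝ) (hPX : IsPmf PX) (hW : ∀ x, IsPmf (W x))
    (sum_m : ∑ y, margY PX W y = 1) (hq1 : ∑ z : 𝒴 × 𝒴, jointYY PX W z.1 z.2 = 1)
    (I μ2 : ℝ)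
    (hIdef : ∑ z : 𝒴 × 𝒴, jointYY PX W z.1 z.2 * Real.log (lam PX W z.1 z.2) = I)
    (hμ2 : ∑ z : 𝒴 × 𝒴, jointYY PX W z.1 z.2 * (Real.log (lam PX W z.1 z.2))^2 = μ2)
    (β : ℝ) (n D : ℕ) (hL : 1 ≤ ell β n) (hD : (D : ℤ) ≤ (ell β n : ℤ) - 1)
    (hc : 0 < (n : ℝ) - (2 * (ell β n : ℝ) - 1))
    (b : ℝ)
    (ha : ∀ s : ℕ, 1 ≤ s → s ≤ D → (s:ℝ) * I < Real.log ((n:ℝ) - (2*(ell β n : ℝ)-1)))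
    (hb : ∀ s : ℕ, 1 ≤ s → s ≤ D →
      ((s:ℝ)*μ2 - s*I^2)/(Real.log ((n:ℝ)-(2*(ell β n : ℝ)-1)) - s*I)^2 ≤ b) :
    (2*(D:ℝ)/n) * (1 - b) ≤ PstarN PX W β n := by
  apply le_csInf
  · exact ⟨errProbN PX W n (ell β n) (fun _ _ => 0), fun _ _ => 0,
      fun _ _ => show (0:ℤ) ∈ _ from Finset.mem_Icc.mpr (by omega), rfl⟩
  · rintro e ⟨That, -, rfl⟩
    exact errProb_lower PX W hPX hW sum_m hq1 I μ2 hIdef hμ2 n (ell β n) D hL hD hc b ha hb That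

lemma PstarN_le (PX : 𝒳 → ℝ) (W : 𝒳 → 𝒴 → ℝ) (hPX : IsPmf PX) (hW : ∀ x, IsPmf (W x))
    (sum_m : ∑ y, margY PX W y = 1) (hq1 : ∑ z : 𝒴 × 𝒴, jointYY PX W z.1 z.2 = 1)
    (β : ℝ) (n : ℕ) (hL : 1 ≤ ell β n)
    (hc : 0 ≤ (n : ℝ) - (2 * (ell β n : ℝ) - 1)) :
    PstarN PX W β n ≤ (2 * (ell β n : ℝ) - 1) * (n:ℝ)⁻¹ := by
  classical
  set L := ell β n with hLdef
  have hval : errProbN PX W n L (fun _ _ => 0) = (2 * (L:ℝ) - 1) * (n:ℝ)⁻¹ := by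
    unfold errProbN
    have e1 : ∀ t ∈ Finset.Icc (1 - (L:ℤ)) (L:ℤ),
        (∑ y₁ : Fin L → 𝒴, ∑ y₂ : Fin L → 𝒴,
          if (fun (_ _ : Fin L → 𝒴) => (0:ℤ)) y₁ y₂ ≠ t then
            priorT n L t * condLik PX W L t y₁ y₂ else 0)
        = if t = 0 then 0 else (n:ℝ)⁻¹ := by
      intro t ht
      by_cases h : t = 0
      · subst h; simp
      · rw [if_neg h]
        have hcondtrue : ((fun (_ _ : Fin L → 𝒴) => (0:ℤ)) = fun _ _ => 0) := rfl
        have e2 : ∀ y₁ y₂ : Fin L → 𝒴,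
            (if (0:ℤ) ≠ t then priorT n L t * condLik PX W L t y₁ y₂ else 0)
            = priorT n L t * condLik PX W L t y₁ y₂ := fun y₁ y₂ =>
          if_pos (fun hh => h hh.symm)
        simp only [e2]
        simp_rw [← Finset.mul_sum]
        rw [sum_condLik PX W hPX hW sum_m hq1 L t ht, mul_one]
        unfold priorT
        rw [if_neg h, if_pos ht]
    rw [Finset.sum_congr rfl e1]
    have h0mem : (0:ℤ) ∈ Finset.Icc (1 - (L:ℤ)) (L:ℤ) := Finset.mem_Icc.mpr (by omega)
    have e3 : ∀ t, (if t = (0:ℤ) then (0:ℝ) else (n:ℝ)⁻¹)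
        = (n:ℝ)⁻¹ - (if t = 0 then (n:ℝ)⁻¹ else 0) := by
      intro t; by_cases h : t = 0 <;> simp [h]
    simp_rw [e3]
    rw [Finset.sum_sub_distrib, Finset.sum_const, Int.card_Icc]
    have e4 : (∑ t ∈ Finset.Icc (1 - (L:ℤ)) (L:ℤ), if t = 0 then (n:ℝ)⁻¹ else 0)
        = (n:ℝ)⁻¹ := by
      have : ∀ t, (if t = (0:ℤ) then (n:ℝ)⁻¹ else 0) = if (0:ℤ) = t then (n:ℝ)⁻¹ else 0 := by
        intro t; by_cases h : t = 0
        · rw [if_pos h, if_pos h.symm]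
        · rw [if_neg h, if_neg fun hh => h hh.symm]
      simp_rw [this]
      rw [Finset.sum_ite_eq, if_pos h0mem]
    rw [e4, nsmul_eq_mul]
    have : (((L:ℤ) + 1 - (1 - (L:ℤ))).toNat : ℝ) = 2 * (L:ℝ) := by
      have h2 : ((L:ℤ) + 1 - (1 - (L:ℤ))).toNat = 2 * L := by omega
      rw [h2]; push_cast; ring
    rw [this]; ring
  rw [← hval]
  apply csInf_le
  · exact ⟨0, fun e ⟨That, _, he⟩ => he ▸ errProbN_nonneg PX W hPX hW n L hc That⟩
  · exact ⟨fun _ _ => 0, fun _ _ => show (0:ℤ) ∈ _ from Finset.mem_Icc.mpr (by omega), rfl⟩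

/-- Matching lower bound on the asymptotic Bayesian error probability of
overlap detection in the noisy setting. -/
theorem noisy_lower_bound
    (PX : 𝒳 → ℝ) (W : 𝒳 → 𝒴 → ℝ)
    (hPX : IsPmf PX) (hW : ∀ x, IsPmf (W x))
    (β : ℝ) (hβ : 0 < β)
    (hI : 0 < mutInf PX W) :
    2 * min β (1 / mutInf PX W) ≤
      liminf (fun n : ℕ => ((n : ℝ) / Real.log n) * PstarN PX W β n) atTop := by
  classical
  have sum_m := sum_margY hPX hW
  have hq1 := sum_jointYY hPX hW
  set It := mutInf PX W with hItdef
  have hIdef : ∑ z : 𝒴 × 𝒴, jointYY PX W z.1 z.2 * Real.log (lam PX W z.1 z.2) = It :=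
    (mutInf_eq hPX hW).symm
  set μ2 := ∑ z : 𝒴 × 𝒴, jointYY PX W z.1 z.2 * (Real.log (lam PX W z.1 z.2))^2 with hμ2def
  have hμ2 : ∑ z : 𝒴 × 𝒴, jointYY PX W z.1 z.2 * (Real.log (lam PX W z.1 z.2))^2 = μ2 := rfl
  have hvar : 0 ≤ μ2 - It^2 := by
    have e : ∀ z : 𝒴 × 𝒴, jointYY PX W z.1 z.2 * (Real.log (lam PX W z.1 z.2) - It)^2
        = jointYY PX W z.1 z.2 * (Real.log (lam PX W z.1 z.2))^2
          - 2 * It * (jointYY PX W z.1 z.2 * Real.log (lam PX W z.1 z.2))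
          + It^2 * jointYY PX W z.1 z.2 := fun z => by ring
    have h1 : ∑ z : 𝒴 × 𝒴, jointYY PX W z.1 z.2 * (Real.log (lam PX W z.1 z.2) - It)^2
        = μ2 - It^2 := by
      simp_rw [e, Finset.sum_add_distrib, Finset.sum_sub_distrib, ← Finset.mul_sum]
      rw [hμ2, hIdef, hq1]
      ring
    rw [← h1]
    exact Finset.sum_nonneg fun z _ => mul_nonneg (jointYY_nonneg hPX hW _ _) (sq_nonneg _)
  set f := fun n : ℕ => ((n : ℝ) / Real.log n) * PstarN PX W β n with hfdef
  have hlog : Filter.Tendsto (fun n : ℕ => Real.log n) atTop atTop :=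
    Real.tendsto_log_atTop.comp tendsto_natCast_atTop_atTop
  have E2 : ∀ᶠ n : ℕ in atTop, 1 ≤ Real.log n := hlog.eventually_ge_atTop 1
  have E4 : ∀ᶠ n : ℕ in atTop, (8:ℝ) ≤ (n:ℝ) := tendsto_natCast_atTop_atTop.eventually_ge_atTop 8
  have E3 : ∀ᶠ n : ℕ in atTop, Real.log n ≤ (n:ℝ)/(8*(β+1)) := by
    have hc8 : (0:ℝ) < (8*(β+1))⁻¹ := by positivity
    have hE3' : ∀ᶠ x : ℝ in atTop, ‖Real.log x‖ ≤ (8*(β+1))⁻¹ * ‖x‖ :=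
      Real.isLittleO_log_id_atTop.def hc8
    have hE3'' : ∀ᶠ x : ℝ in atTop, Real.log x ≤ (x:ℝ)/(8*(β+1)) := by
      filter_upwards [hE3', eventually_ge_atTop (1:ℝ)] with x hx h1x
      simp only [Real.norm_eq_abs] at hx
      rw [abs_of_nonneg (by linarith : (0:ℝ) ≤ x)] at hx
      have hla : Real.log x ≤ |Real.log x| := le_abs_self _
      rw [div_eq_inv_mul]
      linarith
    exact tendsto_natCast_atTop_atTop.eventually hE3''
  -- eventual facts giving a positive prior on t = 0 and basic bounds
  have basic : ∀ᶠ n : ℕ in atTop, (1 ≤ ell β n ∧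
      2 * (ell β n : ℝ) - 1 ≤ (n:ℝ)/2) ∧ 0 < (n:ℝ) - (2 * (ell β n : ℝ) - 1) := by
    filter_upwards [E2, E3, E4] with n h2 h3 h4
    have hLub : (ell β n : ℝ) ≤ β * Real.log n + 1 :=
      le_of_lt (Nat.ceil_lt_add_one (by positivity))
    have hbl : 2*β*(Real.log n) ≤ 2*β*((n:ℝ)/(8*(β+1))) :=
      mul_le_mul_of_nonneg_left h3 (by positivity)
    have hq : 2*β*((n:ℝ)/(8*(β+1))) ≤ (n:ℝ)/4 := by
      have hfrac : 2*β/(8*(β+1)) ≤ 1/4 := by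
        rw [div_le_div_iff₀ (by positivity) (by norm_num : (0:ℝ) < 4)]
        nlinarith
      have hmul := mul_le_mul_of_nonneg_right hfrac (by linarith : (0:ℝ) ≤ (n:ℝ))
      calc 2*β*((n:ℝ)/(8*(β+1))) = (2*β/(8*(β+1))) * (n:ℝ) := by ring
        _ ≤ (1/4) * (n:ℝ) := hmul
        _ = (n:ℝ)/4 := by ring
    have h2L : 2 * (ell β n : ℝ) - 1 ≤ (n:ℝ)/2 := by nlinarith
    have hL1 : 1 ≤ ell β n := Nat.one_le_ceil_iff.mpr (by nlinarith)
    exact ⟨⟨hL1, h2L⟩, by linarith⟩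
  -- eventual upper bound (for coboundedness)
  have hupper : ∀ᶠ n : ℕ in atTop, f n ≤ 2*β + 1 := by
    filter_upwards [E2, E4, basic] with n h2 h4 hb
    obtain ⟨⟨hL1, h2L⟩, hcpos⟩ := hb
    have hle := PstarN_le PX W hPX hW sum_m hq1 β n hL1 hcpos.le
    have hnlog : 0 ≤ (n:ℝ)/Real.log n := by positivity
    have hn0 : (0:ℝ) < (n:ℝ) := by linarith
    have hlogpos : (0:ℝ) < Real.log n := by linarith
    have step : f n ≤ ((n:ℝ)/Real.log n) * ((2 * (ell β n : ℝ) - 1) * (n:ℝ)⁻¹) :=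
      mul_le_mul_of_nonneg_left hle hnlog
    have heq : ((n:ℝ)/Real.log n) * ((2 * (ell β n : ℝ) - 1) * (n:ℝ)⁻¹)
        = (2 * (ell β n : ℝ) - 1) / Real.log n := by
      have hne1 : (n:ℝ) ≠ 0 := ne_of_gt hn0
      have hne2 : Real.log n ≠ 0 := ne_of_gt hlogpos
      field_simp
    rw [heq] at step
    have hLub : (ell β n : ℝ) ≤ β * Real.log n + 1 :=
      le_of_lt (Nat.ceil_lt_add_one (by positivity))
    have : (2 * (ell β n : ℝ) - 1) / Real.log n ≤ 2*β + 1 := by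
      rw [div_le_iff₀ (by linarith : (0:ℝ) < Real.log n)]
      nlinarith
    linarith
  have hbdd : Filter.IsBoundedUnder (· ≤ ·) atTop f := ⟨2*β+1, eventually_map.mpr hupper⟩
  -- main eventual lower bound
  have key : ∀ c', c' < 2 * min β (1 / It) → ∀ᶠ n : ℕ in atTop, c' ≤ f n := by
    intro c' hc'
    set ε : ℝ := min (1/2) ((2 * min β (1/It) - c') * It / 4) with hεdef
    have hε0 : 0 < ε := by
      apply lt_min (by norm_num)
      have : 0 < 2 * min β (1/It) - c' := by linarith
      positivity
    have hε1 : ε < 1 := lt_of_le_of_lt (min_le_left _ _) (by norm_num)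
    set m : ℝ := min β ((1-ε)/It) with hmdef
    have hm : c' < 2 * m := by
      have h1 : (1-ε)/It = 1/It - ε/It := by ring
      have h2 : ε/It ≤ (2 * min β (1/It) - c')/4 := by
        have hmr : ε ≤ (2 * min β (1/It) - c') * It / 4 := min_le_right _ _
        rw [div_le_div_iff₀ hI (by norm_num : (0:ℝ) < 4)]
        linarith
      have h3 : min β (1/It) - ε/It ≤ m := by
        rw [hmdef, h1]
        rcases le_total β (1/It - ε/It) with h | h
        · have : β ≤ 1/It := by
            have : 0 ≤ ε/It := by positivity
            linarith
          rw [min_eq_left h, min_eq_left this]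
          have : 0 ≤ ε/It := by positivity
          linarith
        · rw [min_eq_right h]
          exact sub_le_sub_right (min_le_right _ _) _
      linarith
    set C : ℝ := 4*(1-ε)*(μ2 - It^2)/(It*ε^2) with hCdef
    have hC0 : 0 ≤ C := by
      apply div_nonneg _ (by positivity)
      have : 0 ≤ 1 - ε := by linarith
      positivity
    set u : ℕ → ℝ := fun n => (Real.log n)⁻¹ with hudef
    have hu : Filter.Tendsto u atTop (nhds 0) := hlog.inv_tendsto_atTop
    set g : ℕ → ℝ := fun n => (2*(m - 2*u n)) * (1 - C*u n) with hgdef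
    have hg : Filter.Tendsto g atTop (nhds (2*m)) := by
      have h1 : Filter.Tendsto (fun n => 2*(m - 2*u n)) atTop (nhds (2*(m - 2*0))) :=
        (tendsto_const_nhds.sub (hu.const_mul 2)).const_mul 2
      have h2 : Filter.Tendsto (fun n => 1 - C*u n) atTop (nhds (1 - C*0)) :=
        tendsto_const_nhds.sub (hu.const_mul C)
      have h3 := h1.mul h2
      norm_num at h3
      exact h3
    have Eg : ∀ᶠ n : ℕ in atTop, c' < g n := hg.eventually (eventually_gt_nhds hm)
    have E5 : ∀ᶠ n : ℕ in atTop, 2*Real.log 2/ε ≤ Real.log n := hlog.eventually_ge_atTop _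
    have E7 : ∀ᶠ n : ℕ in atTop, C ≤ Real.log n := hlog.eventually_ge_atTop C
    filter_upwards [E2, E4, E5, E7, Eg, basic] with n h2 h4 h5 h7 hgn hb
    obtain ⟨⟨hL1, h2L⟩, hcpos⟩ := hb
    set L := ell β n with hLdef
    have hlogpos : (0:ℝ) < Real.log n := by linarith
    have hn0 : (0:ℝ) < (n:ℝ) := by linarith
    have hLlb : β * Real.log n ≤ (L:ℝ) := Nat.le_ceil _
    have hLub : (L:ℝ) ≤ β * Real.log n + 1 := le_of_lt (Nat.ceil_lt_add_one (by positivity))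
    set Kn : ℕ := ⌊(1-ε) * Real.log n / It⌋₊ with hKndef
    have hKn_ub : (Kn:ℝ) ≤ (1-ε) * Real.log n / It := Nat.floor_le (by
      have : 0 ≤ 1 - ε := by linarith
      positivity)
    have hKn_lb : (1-ε) * Real.log n / It - 1 ≤ (Kn:ℝ) :=
      le_of_lt (by linarith [Nat.lt_floor_add_one ((1-ε) * Real.log n / It)])
    set D : ℕ := min (L - 1) Kn with hDdef
    have hDL : (D:ℤ) ≤ (L:ℤ) - 1 := by
      have : D ≤ L - 1 := min_le_left _ _
      omega
    -- log of the prior mass on 0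
    have hclog : (1 - ε/2) * Real.log n ≤ Real.log ((n:ℝ) - (2*(L:ℝ) - 1)) := by
      have hhalf : (n:ℝ)/2 ≤ (n:ℝ) - (2*(L:ℝ) - 1) := by linarith
      have hl2 : Real.log ((n:ℝ)/2) ≤ Real.log ((n:ℝ) - (2*(L:ℝ) - 1)) :=
        Real.log_le_log (by positivity) hhalf
      have hld : Real.log ((n:ℝ)/2) = Real.log n - Real.log 2 :=
        Real.log_div (ne_of_gt hn0) (by norm_num)
      have hlog2 : Real.log 2 ≤ (ε/2) * Real.log n := by
        rw [div_le_iff₀ hε0] at h5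
        nlinarith
      nlinarith
    have hKnI : (Kn:ℝ) * It ≤ (1-ε) * Real.log n := by
      rw [div_eq_inv_mul] at hKn_ub
      calc (Kn:ℝ) * It ≤ (It⁻¹ * ((1-ε) * Real.log n)) * It :=
            mul_le_mul_of_nonneg_right hKn_ub hI.le
        _ = (1-ε) * Real.log n := by field_simp
    have haux : ∀ s : ℕ, 1 ≤ s → s ≤ D →
        (s:ℝ) * It ≤ (1-ε) * Real.log n ∧
        (ε/2) * Real.log n ≤ Real.log ((n:ℝ) - (2*(L:ℝ) - 1)) - (s:ℝ) * It := by
      intro s hs1 hsD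
      have hsK : (s:ℝ) ≤ (Kn:ℝ) := by
        have : s ≤ Kn := le_trans hsD (min_le_right _ _)
        exact_mod_cast this
      have h1 : (s:ℝ) * It ≤ (1-ε) * Real.log n :=
        le_trans (mul_le_mul_of_nonneg_right hsK hI.le) hKnI
      constructor
      · exact h1
      · nlinarith
    have ha : ∀ s : ℕ, 1 ≤ s → s ≤ D →
        (s:ℝ) * It < Real.log ((n:ℝ) - (2*(L:ℝ) - 1)) := by
      intro s hs1 hsD
      have := (haux s hs1 hsD).2
      nlinarith [hε0, hlogpos]
    have hb' : ∀ s : ℕ, 1 ≤ s → s ≤ D →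
        ((s:ℝ)*μ2 - s*It^2)/(Real.log ((n:ℝ) - (2*(L:ℝ)-1)) - s*It)^2
          ≤ C * u n := by
      intro s hs1 hsD
      obtain ⟨h1, h2⟩ := haux s hs1 hsD
      have hsK : (s:ℝ) ≤ (Kn:ℝ) := by
        have : s ≤ Kn := le_trans hsD (min_le_right _ _)
        exact_mod_cast this
      have hεlog : (0:ℝ) < (ε/2) * Real.log n := by positivity
      have step1 : ((s:ℝ)*μ2 - s*It^2)/(Real.log ((n:ℝ) - (2*(L:ℝ)-1)) - s*It)^2
          ≤ ((Kn:ℝ)*(μ2 - It^2))/((ε/2) * Real.log n)^2 := by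
        apply div_le_div₀ (by nlinarith) (by nlinarith) (by positivity)
        exact pow_le_pow_left₀ hεlog.le h2 2
      have step2 : ((Kn:ℝ)*(μ2 - It^2))/((ε/2) * Real.log n)^2 ≤ C * u n := by
        rw [hudef]
        rw [div_le_iff₀ (by positivity)]
        have expand : C * (Real.log n)⁻¹ * ((ε/2) * Real.log n)^2
            = ((1-ε)*(μ2 - It^2)/It) * Real.log n := by
          rw [hCdef]
          field_simp
          ring
        rw [expand]
        have : (Kn:ℝ)*(μ2 - It^2) ≤ ((1-ε) * Real.log n / It)*(μ2 - It^2) :=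
          mul_le_mul_of_nonneg_right hKn_ub hvar
        calc (Kn:ℝ)*(μ2 - It^2) ≤ ((1-ε) * Real.log n / It)*(μ2 - It^2) := this
          _ = ((1-ε)*(μ2 - It^2)/It) * Real.log n := by ring
      linarith
    have hPge := PstarN_ge PX W hPX hW sum_m hq1 It μ2 hIdef hμ2 β n D hL1 hDL hcpos
      (C * u n) ha hb'
    -- now the numeric chain
    have hflow : (2*(D:ℝ)/Real.log n) * (1 - C * u n) ≤ f n := by
      have hnl : (0:ℝ) ≤ (n:ℝ)/Real.log n := by positivity
      have step : ((n:ℝ)/Real.log n) * ((2*(D:ℝ)/n) * (1 - C * u n)) ≤ f n :=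
        mul_le_mul_of_nonneg_left hPge hnl
      have heq : ((n:ℝ)/Real.log n) * ((2*(D:ℝ)/n) * (1 - C * u n))
          = (2*(D:ℝ)/Real.log n) * (1 - C * u n) := by
        have hne1 : (n:ℝ) ≠ 0 := ne_of_gt hn0
        have hne2 : Real.log n ≠ 0 := ne_of_gt hlogpos
        field_simp
      rw [heq] at step
      exact step
    have hgle : g n ≤ (2*(D:ℝ)/Real.log n) * (1 - C * u n) := by
      have hD_lb : m * Real.log n - 2 ≤ (D:ℝ) := by
        have hcast : (D:ℝ) = min ((L:ℝ) - 1) (Kn:ℝ) := by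
          rw [hDdef, Nat.cast_min, Nat.cast_sub hL1, Nat.cast_one]
        rw [hcast]
        apply le_min
        · have : m * Real.log n ≤ β * Real.log n :=
            mul_le_mul_of_nonneg_right (min_le_left _ _) hlogpos.le
          linarith
        · have : m * Real.log n ≤ ((1-ε)/It) * Real.log n :=
            mul_le_mul_of_nonneg_right (min_le_right _ _) hlogpos.le
          have e : ((1-ε)/It) * Real.log n = (1-ε) * Real.log n / It := by ring
          linarith [hKn_lb]
      have huc : u n * Real.log n = 1 := inv_mul_cancel₀ (ne_of_gt hlogpos)
      have h1 : 2*(m - 2*u n) ≤ 2*(D:ℝ)/Real.log n := by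
        rw [le_div_iff₀ hlogpos]
        nlinarith [hD_lb, huc]
      have h2nn : 0 ≤ 1 - C * u n := by
        have : C * u n ≤ Real.log n * u n := mul_le_mul_of_nonneg_right h7 (by positivity)
        have huc' : Real.log n * u n = 1 := mul_inv_cancel₀ (ne_of_gt hlogpos)
        linarith
      exact mul_le_mul_of_nonneg_right h1 h2nn
    linarith
  -- conclude via liminf
  by_contra hcon
  push_neg at hcon
  set Λ := liminf f atTop with hΛ
  have h1 : (Λ + 2 * min β (1 / It))/2 < 2 * min β (1 / It) := by linarith
  have h2 := Filter.le_liminf_of_le hbdd.isCoboundedUnder_ge (key _ h1)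
  rw [← hΛ] at h2
  linarith

end
end

section
/- Let μ be a stationary ergodic measure on 𝒳^ℤ whose entropy rate satisfies 0 < ℋ₁ < ∞ and such that for every α ∈ (1,2] the order-α Rényi entropy rate ℋ_α exists and ℋ_α → ℋ₁ as α ↓ 1. Fix β > 0, let ρ ∈ (0,1), and let τ : ℕ → ℕ satisfy τ(n) → ∞ and τ(n)/log n → 0. Then for every η > 0: lim_{n→∞} n · sup{ ∑_{x∈𝒳^t} P_{X₁^t}(x)² · 1[ P_{X₁^t}(x) ≤ (ρ^{τ(n)−1}·n_ℓ)^{−1} ] : t ∈ ℕ, t > (1+η)(log n)/ℋ₁ } = 0. -/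
open MeasureTheory Filter Real

section

variable {𝒳 : Type*} [Fintype 𝒳] [MeasurableSpace 𝒳] [MeasurableSingletonClass 𝒳]

/-- The left shift on two-sided sequences. -/
def shift {𝒳 : Type*} : (ℤ → 𝒳) → (ℤ → 𝒳) := fun ω i => ω (i + 1)

/-- The pmf of the block `(X_a, …, X_{a+t-1})` under `μ`. -/
noncomputable def blockPmf (μ : Measure (ℤ → 𝒳)) (a : ℤ) (t : ℕ) (x : Fin t → 𝒳) : ℝ :=
  (μ {ω | ∀ i : Fin t, ω (a + ((i : ℕ) : ℤ)) = x i}).toReal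

/-- Shannon entropy of the block `(X_1, …, X_t)`. -/
noncomputable def shannonH (μ : Measure (ℤ → 𝒳)) (t : ℕ) : ℝ :=
  ∑ x : Fin t → 𝒳, Real.negMulLog (blockPmf μ 1 t x)

/-- Order-`α` Rényi entropy of the block `(X_1, …, X_t)`. -/
noncomputable def renyiH (μ : Measure (ℤ → 𝒳)) (α : ℝ) (t : ℕ) : ℝ :=
  (1 - α)⁻¹ * Real.log (∑ x : Fin t → 𝒳, blockPmf μ 1 t x ^ α)

/-- `max_{x : P(x) > 0} log (1 / P_{X_1^t}(x))`. -/
noncomputable def maxInfo (μ : Measure (ℤ → 𝒳)) (t : ℕ) : ℝ :=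
  sSup {r : ℝ | ∃ x : Fin t → 𝒳, 0 < blockPmf μ 1 t x ∧ r = Real.log (1 / blockPmf μ 1 t x)}

/-- The σ-algebra generated by the coordinates with index `≤ i`. -/
def pastSigma (𝒳 : Type*) [MeasurableSpace 𝒳] (i : ℤ) : MeasurableSpace (ℤ → 𝒳) :=
  MeasurableSpace.comap (fun ω (j : {j : ℤ // j ≤ i}) => ω (j : ℤ)) inferInstance

/-- The σ-algebra generated by the coordinates with index `≥ i`. -/
def futureSigma (𝒳 : Type*) [MeasurableSpace 𝒳] (i : ℤ) : MeasurableSpace (ℤ → 𝒳) :=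
  MeasurableSpace.comap (fun ω (j : {j : ℤ // i ≤ j}) => ω (j : ℤ)) inferInstance

/-- Strong mixing coefficient `d(s)`. -/
noncomputable def mixCoef (μ : Measure (ℤ → 𝒳)) (s : ℕ) : ℝ :=
  sSup {r : ℝ | ∃ (i : ℤ) (E F : Set (ℤ → 𝒳)),
    MeasurableSet[pastSigma 𝒳 i] E ∧ MeasurableSet[futureSigma 𝒳 (i + (s : ℤ))] F ∧
    μ E ≠ 0 ∧ r = |(μ (F ∩ E)).toReal / (μ E).toReal - (μ F).toReal|}

/-- The window from which `I(2)` is drawn uniformly, given `I(1) = i₁`. -/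
noncomputable def window (n L : ℕ) (i₁ : ℤ) : Finset ℤ :=
  if i₁ ≤ (L : ℤ) - 1 then Finset.Icc (i₁ - (L : ℤ) + 1) (i₁ + (n : ℤ) - (L : ℤ))
  else if i₁ ≤ (n : ℤ) - (L : ℤ) + 1 then Finset.Icc 1 (n : ℤ)
  else Finset.Icc (i₁ + (L : ℤ) - (n : ℤ)) (i₁ + (L : ℤ) - 1)

/-- Joint pmf of the pair of starting indices `(I(1), I(2))`. -/
noncomputable def idxWeight (n L : ℕ) (i₁ i₂ : ℤ) : ℝ :=
  if i₁ ∈ Finset.Icc 1 (n : ℤ) ∧ i₂ ∈ window n L i₁ then (((n : ℝ)) ^ 2)⁻¹ else 0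

/-- The (signed) overlap between the two reads. -/
def overlap (L : ℕ) (i₁ i₂ : ℤ) : ℤ :=
  if i₁ ≤ i₂ then max 0 ((L : ℤ) - (i₂ - i₁)) else -(max 0 ((L : ℤ) - (i₁ - i₂)))

/-- Bayesian error probability of the detector `That` in the noiseless setting. -/
noncomputable def errProb (μ : Measure (ℤ → 𝒳)) (n L : ℕ)
    (That : (Fin L → 𝒳) → (Fin L → 𝒳) → ℤ) : ℝ :=
  ∑' p : ℤ × ℤ, idxWeight n L p.1 p.2 *
    (μ {ω | That (fun k => ω (p.1 + ((k : ℕ) : ℤ))) (fun k => ω (p.2 + ((k : ℕ) : ℤ))) ≠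
        overlap L p.1 p.2}).toReal

/-- Minimal Bayesian error probability over all detectors with values in `𝒯`. -/
noncomputable def Pstar (μ : Measure (ℤ → 𝒳)) (β : ℝ) (n : ℕ) : ℝ :=
  sInf {e : ℝ | ∃ That : (Fin (ell β n) → 𝒳) → (Fin (ell β n) → 𝒳) → ℤ,
    (∀ y₁ y₂, That y₁ y₂ ∈ Set.Icc (1 - (ell β n : ℤ)) ((ell β n : ℤ))) ∧
    e = errProb μ n (ell β n) That}

/-- Uniform bound on truncated second-moment sums of block probabilities
(Lemma: partial second-order Rényi sum bound). -/
theorem partial_renyi_sum_bound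
    (μ : Measure (ℤ → 𝒳)) [IsProbabilityMeasure μ]
    (herg : Ergodic (shift (𝒳 := 𝒳)) μ)
    (H₁ : ℝ) (hH₁pos : 0 < H₁)
    (hH₁ : Tendsto (fun t : ℕ => shannonH μ t / t) atTop (nhds H₁))
    (Hα : ℝ → ℝ)
    (hHα : ∀ α ∈ Set.Ioc (1 : ℝ) 2,
      Tendsto (fun t : ℕ => renyiH μ α t / t) atTop (nhds (Hα α)))
    (hHαconv : Tendsto Hα (nhdsWithin 1 (Set.Ioi 1)) (nhds H₁))
    (β : ℝ) (hβ : 0 < β)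
    (ρ : ℝ) (hρ : ρ ∈ Set.Ioo (0 : ℝ) 1)
    (τ : ℕ → ℕ) (hτ : Tendsto τ atTop atTop)
    (hτ' : Tendsto (fun n : ℕ => (τ n : ℝ) / Real.log n) atTop (nhds 0))
    (η : ℝ) (hη : 0 < η) :
    Tendsto (fun n : ℕ => (n : ℝ) *
        sSup {v : ℝ | ∃ t : ℕ, (1 + η) * Real.log n / H₁ < (t : ℝ) ∧
          v = ∑ x : Fin t → 𝒳, blockPmf μ 1 t x ^ 2 *
            (if blockPmf μ 1 t x ≤ (ρ ^ (τ n - 1) * ((n : ℝ) - (2 * (ell β n : ℝ) - 1)))⁻¹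
              then 1 else 0)})
      atTop (nhds 0) := by
  obtain ⟨hρ0, hρ1⟩ := hρ
  have hη1 : (0:ℝ) < 1 + η := by linarith
  obtain ⟨δ, hδdef⟩ : ∃ x : ℝ, x = H₁ * η / (4 * (1 + η)) := ⟨_, rfl⟩
  have hδpos : 0 < δ := by rw [hδdef]; positivity
  -- choose α close to 1
  have hev1 : ∀ᶠ α' in nhdsWithin 1 (Set.Ioi 1), |Hα α' - H₁| < δ := by
    have := Metric.tendsto_nhds.mp hHαconv δ hδpos
    filter_upwards [this] with α' h
    rwa [Real.dist_eq] at h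
  have hev2 : ∀ᶠ α' in nhdsWithin 1 (Set.Ioi 1), α' ∈ Set.Ioc (1:ℝ) 2 := by
    filter_upwards [eventually_mem_nhdsWithin,
      eventually_nhdsWithin_of_eventually_nhds (eventually_le_nhds (by norm_num : (1:ℝ) < 2))]
      with α' h1 h2
    exact ⟨h1, h2⟩
  obtain ⟨α, hdist, hα1, hα2⟩ := (hev1.and hev2).exists
  have habs := abs_lt.mp hdist
  obtain ⟨a, hadef⟩ : ∃ x : ℝ, x = α - 1 := ⟨_, rfl⟩
  have hapos : 0 < a := by rw [hadef]; linarith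
  obtain ⟨G, hGdef⟩ : ∃ x : ℝ, x = Hα α - δ := ⟨_, rfl⟩
  have hδeq : δ * (4 * (1 + η)) = H₁ * η := by rw [hδdef]; field_simp
  have hG2 : H₁ - 2 * δ < G := by rw [hGdef]; linarith [habs.1]
  have hGpos : 0 < G := by nlinarith [hδeq, hH₁pos, hη, hη1]
  have hGη : H₁ < G * (1 + η) := by nlinarith [hδeq, hH₁pos, hη, hη1, hG2]
  obtain ⟨K, hKdef⟩ : ∃ x : ℝ, x = a * G * (1 + η) / H₁ := ⟨_, rfl⟩
  have hKa : a < K := by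
    rw [hKdef, lt_div_iff₀ hH₁pos]
    nlinarith [hGη, hapos]
  have haK : a - K < 0 := by linarith
  -- Rényi entropy rate lower bound threshold
  have hRenyi := hHα α ⟨hα1, hα2⟩
  have hev3 : ∀ᶠ t : ℕ in atTop, G < renyiH μ α t / t :=
    hRenyi.eventually (eventually_gt_nhds (by rw [hGdef]; linarith))
  obtain ⟨T, hT⟩ := eventually_atTop.mp (hev3.and (eventually_ge_atTop 1))
  -- basic limits
  have hlogtop : Tendsto (fun n : ℕ => Real.log n) atTop atTop :=
    Real.tendsto_log_atTop.comp tendsto_natCast_atTop_atTop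
  have hlogpos : ∀ᶠ n : ℕ in atTop, 0 < Real.log n := hlogtop.eventually_gt_atTop 0
  have hlogdiv : Tendsto (fun n : ℕ => Real.log n / (n:ℝ)) atTop (nhds 0) :=
    (Real.isLittleO_log_id_atTop.comp_tendsto tendsto_natCast_atTop_atTop).tendsto_div_nhds_zero
  have hinvlog : Tendsto (fun n : ℕ => (Real.log n)⁻¹) atTop (nhds 0) :=
    tendsto_inv_atTop_zero.comp hlogtop
  have honediv : Tendsto (fun n : ℕ => 1 / (n:ℝ)) atTop (nhds 0) :=
    tendsto_one_div_atTop_nhds_zero_nat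
  have hellle : ∀ᶠ n : ℕ in atTop, (ell β n : ℝ) < β * Real.log n + 1 := by
    filter_upwards [hlogpos] with n h
    exact Nat.ceil_lt_add_one (by positivity)
  -- (2ℓ-1)/n → 0
  have h2l : Tendsto (fun n : ℕ => (2 * (ell β n : ℝ) - 1) / n) atTop (nhds 0) := by
    have hlo : Tendsto (fun n : ℕ => -(1 / (n:ℝ))) atTop (nhds 0) := by
      simpa using honediv.neg
    have hhi : Tendsto (fun n : ℕ => 2 * β * (Real.log n / n) + 1 / n) atTop (nhds 0) := by
      simpa using (hlogdiv.const_mul (2*β)).add honediv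
    refine tendsto_of_tendsto_of_tendsto_of_le_of_le' hlo hhi ?_ ?_
    · filter_upwards [eventually_gt_atTop 0] with n hn
      have hn0 : (0:ℝ) < n := by exact_mod_cast hn
      have hle : (-1:ℝ) ≤ 2 * (ell β n : ℝ) - 1 := by
        have : (0:ℝ) ≤ (ell β n : ℝ) := Nat.cast_nonneg _
        linarith
      calc -(1/(n:ℝ)) = (-1)/n := by ring
        _ ≤ (2 * (ell β n : ℝ) - 1)/n := by gcongr
    · filter_upwards [hellle, eventually_gt_atTop 0] with n hl hn
      have hn0 : (0:ℝ) < n := by exact_mod_cast hn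
      rw [div_le_iff₀ hn0]
      have h2 : 2 * (ell β n : ℝ) - 1 ≤ 2 * β * Real.log n + 1 := by linarith
      calc 2 * (ell β n : ℝ) - 1 ≤ 2 * β * Real.log n + 1 := h2
        _ = (2 * β * (Real.log n / n) + 1/n) * n := by field_simp
  -- n_ℓ / n → 1
  have hnldiv : Tendsto (fun n : ℕ => ((n:ℝ) - (2 * (ell β n : ℝ) - 1)) / n) atTop (nhds 1) := by
    have : Tendsto (fun n : ℕ => 1 - (2 * (ell β n : ℝ) - 1) / n) atTop (nhds 1) := by
      simpa using tendsto_const_nhds.sub h2l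
    refine this.congr' ?_
    filter_upwards [eventually_gt_atTop 0] with n hn
    have hn0 : ((n:ℝ)) ≠ 0 := by positivity
    field_simp
  have hnlpos : ∀ᶠ n : ℕ in atTop, 0 < (n:ℝ) - (2 * (ell β n : ℝ) - 1) := by
    filter_upwards [hnldiv.eventually (eventually_gt_nhds (by norm_num : (0:ℝ) < 1)),
      eventually_gt_atTop 0] with n h hn
    have hn0 : (0:ℝ) < n := by exact_mod_cast hn
    by_contra hcon
    push_neg at hcon
    have : ((n:ℝ) - (2 * (ell β n : ℝ) - 1)) / n ≤ 0 := div_nonpos_of_nonpos_of_nonneg hcon hn0.le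
    linarith
  have hcpos : ∀ᶠ n : ℕ in atTop, 0 < ρ ^ (τ n - 1) * ((n:ℝ) - (2 * (ell β n : ℝ) - 1)) := by
    filter_upwards [hnlpos] with n h
    exact mul_pos (pow_pos hρ0 _) h
  -- log c n / log n → 1
  have hmdiv : Tendsto (fun n : ℕ => ((τ n - 1 : ℕ):ℝ) * Real.log ρ / Real.log n) atTop (nhds 0) := by
    have h0 : Tendsto (fun n : ℕ => ((τ n - 1 : ℕ):ℝ) / Real.log n) atTop (nhds 0) := by
      apply squeeze_zero' ?_ ?_ hτ'
      · filter_upwards [hlogpos] with n h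
        positivity
      · filter_upwards [hlogpos] with n h
        gcongr
        exact_mod_cast Nat.sub_le (τ n) 1
    have := h0.mul_const (Real.log ρ)
    simp only [zero_mul] at this
    refine this.congr fun n => by ring
  have hdiff : Tendsto (fun n : ℕ =>
      Real.log ((n:ℝ) - (2 * (ell β n : ℝ) - 1)) - Real.log n) atTop (nhds 0) := by
    have hcont : Tendsto (fun n : ℕ =>
        Real.log (((n:ℝ) - (2 * (ell β n : ℝ) - 1)) / n)) atTop (nhds 0) := by
      have := (Real.continuousAt_log one_ne_zero).tendsto.comp hnldiv
      simpa [Function.comp_def] using this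
    refine hcont.congr' ?_
    filter_upwards [hnlpos, eventually_gt_atTop 0] with n h hn
    have hn0 : ((n:ℝ)) ≠ 0 := by positivity
    rw [Real.log_div (ne_of_gt h) hn0]
  have hratio : Tendsto (fun n : ℕ =>
      Real.log (ρ ^ (τ n - 1) * ((n:ℝ) - (2 * (ell β n : ℝ) - 1))) / Real.log n)
      atTop (nhds 1) := by
    have hmix : Tendsto (fun n : ℕ =>
        ((τ n - 1 : ℕ):ℝ) * Real.log ρ / Real.log n
          + (Real.log ((n:ℝ) - (2 * (ell β n : ℝ) - 1)) - Real.log n) * (Real.log n)⁻¹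
          + 1) atTop (nhds 1) := by
      have := (hmdiv.add (hdiff.mul hinvlog)).add tendsto_const_nhds (b := (1:ℝ))
      simpa using this
    refine hmix.congr' ?_
    filter_upwards [hnlpos, hlogpos] with n hnl hln
    have hln0 : Real.log n ≠ 0 := ne_of_gt hln
    rw [Real.log_mul (pow_ne_zero _ (ne_of_gt hρ0)) (ne_of_gt hnl), Real.log_pow]
    field_simp
    ring
  -- the dominating sequence tends to 0
  have hψ : Tendsto (fun n : ℕ => 1 - K + (α - 2) *
      (Real.log (ρ ^ (τ n - 1) * ((n:ℝ) - (2 * (ell β n : ℝ) - 1))) / Real.log n))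
      atTop (nhds (a - K)) := by
    have := (hratio.const_mul (α - 2)).const_add (1 - K)
    have heq : 1 - K + (α - 2) * 1 = a - K := by rw [hadef]; ring
    rwa [heq] at this
  have hφ : Tendsto (fun n : ℕ => Real.log n * (1 - K + (α - 2) *
      (Real.log (ρ ^ (τ n - 1) * ((n:ℝ) - (2 * (ell β n : ℝ) - 1))) / Real.log n)))
      atTop atBot := Filter.Tendsto.atTop_mul_neg haK hlogtop hψ
  have hexp : Tendsto (fun n : ℕ => Real.exp (Real.log n * (1 - K + (α - 2) *
      (Real.log (ρ ^ (τ n - 1) * ((n:ℝ) - (2 * (ell β n : ℝ) - 1))) / Real.log n))))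
      atTop (nhds 0) := Real.tendsto_exp_atBot.comp hφ
  have hgoal2 : Tendsto (fun n : ℕ => (n:ℝ) *
      ((ρ ^ (τ n - 1) * ((n:ℝ) - (2 * (ell β n : ℝ) - 1))) ^ (α - 2 : ℝ) *
        Real.exp (-(a * G) * ((1 + η) * Real.log n / H₁)))) atTop (nhds 0) := by
    refine hexp.congr' ?_
    filter_upwards [hcpos, hlogpos, eventually_ge_atTop 1] with n hcn hln hn1
    have hn0 : (0:ℝ) < n := by positivity
    have hln0 : Real.log n ≠ 0 := ne_of_gt hln
    have hH0 : H₁ ≠ 0 := ne_of_gt hH₁pos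
    have hlin : Real.log n * (1 - K + (α - 2) *
        (Real.log (ρ ^ (τ n - 1) * ((n:ℝ) - (2 * (ell β n : ℝ) - 1))) / Real.log n))
        = Real.log n
          + (Real.log (ρ ^ (τ n - 1) * ((n:ℝ) - (2 * (ell β n : ℝ) - 1))) * (α - 2)
            + (-(a * G)) * ((1 + η) * Real.log n / H₁)) := by
      rw [hKdef]
      field_simp
      ring
    rw [hlin, Real.exp_add, Real.exp_add, Real.exp_log hn0,
      Real.rpow_def_of_pos hcn]
    try ring
  -- eventual elementwise bound for members of the sSup set
  have hTtop : Tendsto (fun n : ℕ => (1 + η) * Real.log n / H₁) atTop atTop :=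
    (hlogtop.const_mul_atTop hη1).atTop_div_const hH₁pos
  have hboundev : ∀ᶠ n : ℕ in atTop, ∀ v ∈
      {v : ℝ | ∃ t : ℕ, (1 + η) * Real.log n / H₁ < (t : ℝ) ∧
        v = ∑ x : Fin t → 𝒳, blockPmf μ 1 t x ^ 2 *
          (if blockPmf μ 1 t x ≤ (ρ ^ (τ n - 1) * ((n : ℝ) - (2 * (ell β n : ℝ) - 1)))⁻¹
            then 1 else 0)},
      v ≤ (ρ ^ (τ n - 1) * ((n:ℝ) - (2 * (ell β n : ℝ) - 1))) ^ (α - 2 : ℝ) *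
        Real.exp (-(a * G) * ((1 + η) * Real.log n / H₁)) := by
    filter_upwards [hcpos, hTtop.eventually_ge_atTop (T:ℝ)] with n hcn hTn
    rintro v ⟨t, htlt, rfl⟩
    have htT : T ≤ t := by exact_mod_cast le_trans hTn htlt.le
    obtain ⟨hGt, ht1⟩ := hT t htT
    have htpos : (0:ℝ) < t := by
      have : (1:ℝ) ≤ t := by exact_mod_cast ht1
      linarith
    have hterm : ∀ x : Fin t → 𝒳,
        blockPmf μ 1 t x ^ 2 *
          (if blockPmf μ 1 t x ≤ (ρ ^ (τ n - 1) * ((n : ℝ) - (2 * (ell β n : ℝ) - 1)))⁻¹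
            then 1 else 0)
        ≤ (ρ ^ (τ n - 1) * ((n:ℝ) - (2 * (ell β n : ℝ) - 1))) ^ (α - 2 : ℝ) *
          blockPmf μ 1 t x ^ α := by
      intro x
      have hp0 : 0 ≤ blockPmf μ 1 t x := ENNReal.toReal_nonneg
      set p := blockPmf μ 1 t x with hpdef
      set C := ρ ^ (τ n - 1) * ((n:ℝ) - (2 * (ell β n : ℝ) - 1)) with hCdef
      split_ifs with hif
      · rw [mul_one]
        rcases hp0.eq_or_lt with h0 | h0
        · rw [← h0, Real.zero_rpow (by linarith : α ≠ 0)]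
          norm_num
        · have h2 : p ^ (2:ℕ) = p ^ (α:ℝ) * p ^ (2-α:ℝ) := by
            rw [← Real.rpow_natCast p 2, ← Real.rpow_add h0]
            norm_num
          rw [h2]
          have h3 : p ^ (2-α:ℝ) ≤ C ^ (α-2:ℝ) := by
            have h4 := Real.rpow_le_rpow hp0 hif (by linarith : (0:ℝ) ≤ 2-α)
            rwa [Real.inv_rpow hcn.le, ← Real.rpow_neg hcn.le,
              (by ring : -(2-α) = α-2)] at h4
          calc p ^ (α:ℝ) * p ^ (2-α:ℝ) ≤ p ^ (α:ℝ) * C ^ (α-2:ℝ) :=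
                mul_le_mul_of_nonneg_left h3 (Real.rpow_nonneg hp0 α)
            _ = C ^ (α-2:ℝ) * p ^ (α:ℝ) := mul_comm _ _
      · rw [mul_zero]
        exact mul_nonneg (Real.rpow_nonneg hcn.le _) (Real.rpow_nonneg hp0 _)
    have hsum1 : (∑ x : Fin t → 𝒳, blockPmf μ 1 t x ^ 2 *
          (if blockPmf μ 1 t x ≤ (ρ ^ (τ n - 1) * ((n : ℝ) - (2 * (ell β n : ℝ) - 1)))⁻¹
            then 1 else 0))
        ≤ (ρ ^ (τ n - 1) * ((n:ℝ) - (2 * (ell β n : ℝ) - 1))) ^ (α - 2 : ℝ) *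
          ∑ x : Fin t → 𝒳, blockPmf μ 1 t x ^ α := by
      rw [Finset.mul_sum]
      exact Finset.sum_le_sum fun x _ => hterm x
    have hSle : (∑ x : Fin t → 𝒳, blockPmf μ 1 t x ^ α)
        ≤ Real.exp (-(a * G) * t) := by
      have hSnn : 0 ≤ ∑ x : Fin t → 𝒳, blockPmf μ 1 t x ^ α :=
        Finset.sum_nonneg fun x _ => Real.rpow_nonneg ENNReal.toReal_nonneg _
      rcases hSnn.eq_or_lt with h0 | hpos
      · rw [← h0]; positivity
      · have hlogS : Real.log (∑ x : Fin t → 𝒳, blockPmf μ 1 t x ^ α)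
            = (1 - α) * renyiH μ α t := by
          have h1α : (1:ℝ) - α ≠ 0 := sub_ne_zero.mpr (ne_of_lt hα1)
          rw [renyiH, ← mul_assoc, mul_inv_cancel₀ h1α, one_mul]
        have hr : G * t < renyiH μ α t := (lt_div_iff₀ htpos).mp hGt
        have hmono : (1 - α) * renyiH μ α t ≤ -(a * G) * t := by
          have hmul : a * (G * (t:ℝ)) ≤ a * renyiH μ α t :=
            mul_le_mul_of_nonneg_left hr.le hapos.le
          calc (1 - α) * renyiH μ α t = -(a * renyiH μ α t) := by rw [hadef]; ring
            _ ≤ -(a * (G * (t:ℝ))) := neg_le_neg hmul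
            _ = -(a * G) * t := by ring
        calc (∑ x : Fin t → 𝒳, blockPmf μ 1 t x ^ α)
            = Real.exp (Real.log (∑ x : Fin t → 𝒳, blockPmf μ 1 t x ^ α)) :=
              (Real.exp_log hpos).symm
          _ ≤ Real.exp (-(a * G) * t) := by
              rw [hlogS]
              exact Real.exp_le_exp.mpr hmono
    calc (∑ x : Fin t → 𝒳, blockPmf μ 1 t x ^ 2 *
          (if blockPmf μ 1 t x ≤ (ρ ^ (τ n - 1) * ((n : ℝ) - (2 * (ell β n : ℝ) - 1)))⁻¹
            then 1 else 0))
        ≤ (ρ ^ (τ n - 1) * ((n:ℝ) - (2 * (ell β n : ℝ) - 1))) ^ (α - 2 : ℝ) *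
          ∑ x : Fin t → 𝒳, blockPmf μ 1 t x ^ α := hsum1
      _ ≤ (ρ ^ (τ n - 1) * ((n:ℝ) - (2 * (ell β n : ℝ) - 1))) ^ (α - 2 : ℝ) *
          Real.exp (-(a * G) * t) :=
            mul_le_mul_of_nonneg_left hSle (Real.rpow_nonneg hcn.le _)
      _ ≤ (ρ ^ (τ n - 1) * ((n:ℝ) - (2 * (ell β n : ℝ) - 1))) ^ (α - 2 : ℝ) *
          Real.exp (-(a * G) * ((1 + η) * Real.log n / H₁)) := by
            apply mul_le_mul_of_nonneg_left ?_ (Real.rpow_nonneg hcn.le _)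
            apply Real.exp_le_exp.mpr
            have hag : 0 ≤ a * G := (mul_pos hapos hGpos).le
            calc -(a * G) * (t:ℝ) = -((a * G) * (t:ℝ)) := by ring
              _ ≤ -((a * G) * ((1 + η) * Real.log n / H₁)) :=
                  neg_le_neg (mul_le_mul_of_nonneg_left htlt.le hag)
              _ = -(a * G) * ((1 + η) * Real.log n / H₁) := by ring
    -- end of hboundev
  apply squeeze_zero' (g := fun n : ℕ => (n:ℝ) *
      ((ρ ^ (τ n - 1) * ((n:ℝ) - (2 * (ell β n : ℝ) - 1))) ^ (α - 2 : ℝ) *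
        Real.exp (-(a * G) * ((1 + η) * Real.log n / H₁)))) ?_ ?_ hgoal2
  · apply Filter.Eventually.of_forall
    intro n
    apply mul_nonneg (Nat.cast_nonneg n)
    apply Real.sSup_nonneg
    rintro v ⟨t, ht, rfl⟩
    apply Finset.sum_nonneg
    intro x _
    apply mul_nonneg (sq_nonneg _)
    split_ifs <;> norm_num
  · filter_upwards [hboundev, hcpos] with n hbd hcn
    apply mul_le_mul_of_nonneg_left ?_ (Nat.cast_nonneg n)
    exact Real.sSup_le hbd (by positivity)


end
end

section
/- Let μ be a stationary ergodic measure on 𝒳^ℤ whose entropy rate satisfies 0 < ℋ₁ < ∞ and such that for every α ∈ (1,2] the order-α Rényi entropy rate ℋ_α exists and ℋ_α → ℋ₁ as α ↓ 1. Fix β > 0. Then for every η > 0: lim_{n→∞} sup{ ∑_{x∈𝒳^t} P_{X₁^t}(x) · 1[ P_{X₁^t}(x) ≥ 1/n_ℓ ] : t ∈ ℕ, t > (1+η)(log n)/ℋ₁ } = 0. -/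
open MeasureTheory Filter Real

section

variable {𝒳 : Type*} [Fintype 𝒳] [MeasurableSpace 𝒳] [MeasurableSingletonClass 𝒳]

set_option linter.unusedSectionVars false in
lemma blockPmf_nonneg' (μ : Measure (ℤ → 𝒳)) (a : ℤ) (t : ℕ) (x : Fin t → 𝒳) :
    0 ≤ blockPmf μ a t x := ENNReal.toReal_nonneg

lemma sum_blockPmf_eq_one' (μ : Measure (ℤ → 𝒳)) [IsProbabilityMeasure μ] (a : ℤ) (t : ℕ) :
    ∑ x : Fin t → 𝒳, blockPmf μ a t x = 1 := by
  classical
  set S : (Fin t → 𝒳) → Set (ℤ → 𝒳) := fun x => {ω | ∀ i : Fin t, ω (a + ((i : ℕ) : ℤ)) = x i}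
    with hSdef
  have hmeas : ∀ x, MeasurableSet (S x) := by
    intro x
    have : S x = ⋂ i : Fin t, (fun ω : ℤ → 𝒳 => ω (a + ((i : ℕ) : ℤ))) ⁻¹' {x i} := by
      ext ω; simp [hSdef, Set.mem_iInter]
    rw [this]
    exact MeasurableSet.iInter fun i => (measurable_pi_apply _) (measurableSet_singleton _)
  have hdisj : Pairwise (Function.onFun Disjoint S) := by
    intro x y hxy
    rw [Function.onFun, Set.disjoint_left]
    intro ω hx hy
    exact hxy (funext fun i => (hx i).symm.trans (hy i))
  have hunion : (⋃ x, S x) = Set.univ := by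
    ext ω
    simp only [Set.mem_iUnion, Set.mem_univ, iff_true]
    exact ⟨fun i => ω (a + ((i : ℕ) : ℤ)), fun i => rfl⟩
  have hsum : ∑ x : Fin t → 𝒳, μ (S x) = 1 := by
    rw [← tsum_fintype (L := SummationFilter.unconditional _), ← measure_iUnion hdisj hmeas, hunion, measure_univ]
  have h2 : (∑ x : Fin t → 𝒳, μ (S x)).toReal = 1 := by rw [hsum]; simp
  rw [← h2, ENNReal.toReal_sum (fun x _ => (measure_lt_top μ _).ne)]
  rfl

/-- Uniform bound on sums of large block probabilities
(Lemma: partial probability sum bound). -/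
theorem partial_probability_sum_bound
    (μ : Measure (ℤ → 𝒳)) [IsProbabilityMeasure μ]
    (herg : Ergodic (shift (𝒳 := 𝒳)) μ)
    (H₁ : ℝ) (hH₁pos : 0 < H₁)
    (hH₁ : Tendsto (fun t : ℕ => shannonH μ t / t) atTop (nhds H₁))
    (Hα : ℝ → ℝ)
    (hHα : ∀ α ∈ Set.Ioc (1 : ℝ) 2,
      Tendsto (fun t : ℕ => renyiH μ α t / t) atTop (nhds (Hα α)))
    (hHαconv : Tendsto Hα (nhdsWithin 1 (Set.Ioi 1)) (nhds H₁))
    (β : ℝ) (hβ : 0 < β)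
    (η : ℝ) (hη : 0 < η) :
    Tendsto (fun n : ℕ =>
        sSup {v : ℝ | ∃ t : ℕ, (1 + η) * Real.log n / H₁ < (t : ℝ) ∧
          v = ∑ x : Fin t → 𝒳, blockPmf μ 1 t x *
            (if ((n : ℝ) - (2 * (ell β n : ℝ) - 1))⁻¹ ≤ blockPmf μ 1 t x then 1 else 0)})
      atTop (nhds 0) := by
  classical
  set K : ℝ := H₁ * (1 + η / 2) / (1 + η) with hKdef
  have hη1 : (0:ℝ) < 1 + η := by linarith
  have hKpos : 0 < K := by positivity
  have hKlt : K < H₁ := by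
    rw [hKdef, div_lt_iff₀ hη1]
    nlinarith
  -- choose α
  have hev : ∀ᶠ α in nhdsWithin 1 (Set.Ioi 1), K < Hα α ∧ α ∈ Set.Ioc (1:ℝ) 2 := by
    filter_upwards [hHαconv.eventually (eventually_gt_nhds hKlt),
      Ioo_mem_nhdsGT_of_mem (by norm_num : (1:ℝ) ∈ Set.Ico (1:ℝ) 2)] with α h1 h2
    exact ⟨h1, ⟨h2.1, h2.2.le⟩⟩
  obtain ⟨α, hαK, hαmem⟩ := hev.exists
  have hα1 : 1 < α := hαmem.1
  -- Rényi threshold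
  obtain ⟨T, hT⟩ := Filter.eventually_atTop.mp
    ((hHα α hαmem).eventually (eventually_gt_nhds hαK))
  -- bound function
  set c : ℝ := (α - 1) * (η / 2) with hcdef
  have hcpos : 0 < c := by
    have : 0 < α - 1 := by linarith
    positivity
  have hlogn : Tendsto (fun n : ℕ => Real.log n) atTop atTop :=
    Real.tendsto_log_atTop.comp tendsto_natCast_atTop_atTop
  have hBtend : Tendsto (fun n : ℕ => Real.exp (-c * Real.log n)) atTop (nhds 0) := by
    apply Real.tendsto_exp_atBot.comp
    exact (hlogn.const_mul_atTop_of_neg (by linarith : -c < 0))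
  -- eventual conditions on n
  have hEreal : ∀ᶠ x : ℝ in atTop, 2 * β * Real.log x + 2 ≤ x := by
    have h1 := (Real.isLittleO_log_id_atTop.bound (by positivity : (0:ℝ) < 1 / (4 * β)))
    filter_upwards [h1, eventually_ge_atTop (4:ℝ), eventually_ge_atTop (1:ℝ)] with x hx h4 h1'
    have hlx : |Real.log x| ≤ 1 / (4 * β) * |x| := by simpa using hx
    have hx0 : (0:ℝ) ≤ x := by linarith
    have hl0 : 0 ≤ Real.log x := Real.log_nonneg h1'
    rw [abs_of_nonneg hl0, abs_of_nonneg hx0] at hlx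
    have hmul := mul_le_mul_of_nonneg_left hlx (show (0:ℝ) ≤ 2 * β by positivity)
    have heq : 2 * β * (1 / (4 * β) * x) = x / 2 := by field_simp; ring
    rw [heq] at hmul
    linarith
  have hE : ∀ᶠ n : ℕ in atTop,
      (1 ≤ (n : ℝ) - (2 * (ell β n : ℝ) - 1) ∧ ((n : ℝ) - (2 * (ell β n : ℝ) - 1)) ≤ n) ∧
      ((T : ℝ) ≤ (1 + η) * Real.log n / H₁ ∧ 0 ≤ Real.log n) := by
    have hT' : Tendsto (fun n : ℕ => (1 + η) * Real.log n / H₁) atTop atTop := by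
      apply Tendsto.atTop_div_const hH₁pos
      exact hlogn.const_mul_atTop (by linarith)
    filter_upwards [tendsto_natCast_atTop_atTop.eventually hEreal,
      eventually_ge_atTop 2, hT'.eventually_ge_atTop (T : ℝ),
      hlogn.eventually_ge_atTop 0] with n h1 h2 h3 h4
    have hn1 : (1:ℝ) ≤ n := by exact_mod_cast Nat.one_le_of_lt h2
    have hlog0 : 0 < Real.log n := by
      apply Real.log_pos
      exact_mod_cast h2
    have hellub : (ell β n : ℝ) ≤ β * Real.log n + 1 := by
      unfold ell
      exact (Nat.ceil_lt_add_one (by positivity)).le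
    have helllb : (1:ℝ) ≤ (ell β n : ℝ) := by
      have : 0 < ell β n := Nat.ceil_pos.mpr (by positivity)
      exact_mod_cast this
    refine ⟨⟨by nlinarith, by nlinarith⟩, h3, h4⟩
  -- main squeeze
  apply squeeze_zero' ?_ ?_ hBtend
  · filter_upwards [hE] with n hn
    set nl : ℝ := (n : ℝ) - (2 * (ell β n : ℝ) - 1) with hnl
    set Sn := {v : ℝ | ∃ t : ℕ, (1 + η) * Real.log n / H₁ < (t : ℝ) ∧
          v = ∑ x : Fin t → 𝒳, blockPmf μ 1 t x *
            (if nl⁻¹ ≤ blockPmf μ 1 t x then 1 else 0)} with hSn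
    obtain ⟨t, ht⟩ := exists_nat_gt ((1 + η) * Real.log n / H₁)
    have hmem : (∑ x : Fin t → 𝒳, blockPmf μ 1 t x *
        (if nl⁻¹ ≤ blockPmf μ 1 t x then 1 else 0)) ∈ Sn := ⟨t, ht, rfl⟩
    have hbdd : BddAbove Sn := by
      refine ⟨1, fun v hv => ?_⟩
      obtain ⟨s, hs, rfl⟩ := hv
      calc ∑ x : Fin s → 𝒳, blockPmf μ 1 s x *
            (if nl⁻¹ ≤ blockPmf μ 1 s x then 1 else 0)
          ≤ ∑ x : Fin s → 𝒳, blockPmf μ 1 s x := by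
            apply Finset.sum_le_sum
            intro x _
            have h0 := blockPmf_nonneg' μ 1 s x
            split <;> simp <;> linarith
        _ = 1 := sum_blockPmf_eq_one' μ 1 s
    refine le_trans ?_ (le_csSup hbdd hmem)
    apply Finset.sum_nonneg
    intro x _
    have h0 := blockPmf_nonneg' μ 1 t x
    split <;> simp [h0]
  · filter_upwards [hE] with n hn
    obtain ⟨⟨hnl1, hnln⟩, hTn, hlog0⟩ := hn
    set nl : ℝ := (n : ℝ) - (2 * (ell β n : ℝ) - 1) with hnl
    have hnlpos : 0 < nl := by linarith
    have hnpos : (0:ℝ) < n := by linarith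
    set Ln : ℝ := (1 + η) * Real.log n / H₁ with hLn
    obtain ⟨t0, ht0⟩ := exists_nat_gt Ln
    apply csSup_le
    · exact ⟨_, ⟨t0, ht0, rfl⟩⟩
    rintro v ⟨t, htL, rfl⟩
    -- t is large
    have htT : T ≤ t := by
      have : (T : ℝ) < t := lt_of_le_of_lt hTn htL
      exact_mod_cast this.le
    have htpos : (0:ℝ) < t := by
      have h0L : 0 ≤ Ln := by
        rw [hLn]
        exact div_nonneg (mul_nonneg (by linarith) hlog0) hH₁pos.le
      linarith
    have hren : K * t ≤ renyiH μ α t := by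
      have := hT t htT
      rw [lt_div_iff₀ htpos] at this
      linarith
    -- sum positivity
    have hSpos : 0 < ∑ x : Fin t → 𝒳, blockPmf μ 1 t x ^ α := by
      have h1 := sum_blockPmf_eq_one' μ 1 t
      have hx : ∃ x : Fin t → 𝒳, 0 < blockPmf μ 1 t x := by
        by_contra h
        push_neg at h
        have : ∑ x : Fin t → 𝒳, blockPmf μ 1 t x = 0 :=
          Finset.sum_eq_zero fun x _ => le_antisymm (h x) (blockPmf_nonneg' μ 1 t x)
        rw [this] at h1
        norm_num at h1
      obtain ⟨x, hx⟩ := hx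
      exact Finset.sum_pos' (fun y _ => Real.rpow_nonneg (blockPmf_nonneg' μ 1 t y) α)
        ⟨x, Finset.mem_univ x, Real.rpow_pos_of_pos hx α⟩
    have hSeq : ∑ x : Fin t → 𝒳, blockPmf μ 1 t x ^ α
        = Real.exp ((1 - α) * renyiH μ α t) := by
      rw [renyiH, ← mul_assoc, mul_inv_cancel₀ (by linarith : (1:ℝ) - α ≠ 0), one_mul,
        Real.exp_log hSpos]
    -- pointwise bound
    have hδpos : 0 < nl⁻¹ := by positivity
    have hptw : ∀ x : Fin t → 𝒳, blockPmf μ 1 t x *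
        (if nl⁻¹ ≤ blockPmf μ 1 t x then 1 else 0)
        ≤ nl⁻¹ ^ (1 - α) * blockPmf μ 1 t x ^ α := by
      intro x
      by_cases h : nl⁻¹ ≤ blockPmf μ 1 t x
      · rw [if_pos h, mul_one]
        have hP : 0 < blockPmf μ 1 t x := lt_of_lt_of_le hδpos h
        have hsplit : blockPmf μ 1 t x
            = blockPmf μ 1 t x ^ (1 - α) * blockPmf μ 1 t x ^ α := by
          rw [← Real.rpow_add hP]
          norm_num
        conv_lhs => rw [hsplit]
        exact mul_le_mul_of_nonneg_right
          (Real.rpow_le_rpow_of_nonpos hδpos h (by linarith : (1:ℝ) - α ≤ 0))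
          (Real.rpow_nonneg hP.le α)
      · rw [if_neg h, mul_zero]
        have h0 := blockPmf_nonneg' μ 1 t x
        positivity
    calc (∑ x : Fin t → 𝒳, blockPmf μ 1 t x *
            (if nl⁻¹ ≤ blockPmf μ 1 t x then 1 else 0))
        ≤ ∑ x : Fin t → 𝒳, nl⁻¹ ^ (1 - α) * blockPmf μ 1 t x ^ α :=
          Finset.sum_le_sum fun x _ => hptw x
      _ = nl⁻¹ ^ (1 - α) * Real.exp ((1 - α) * renyiH μ α t) := by
          rw [← Finset.mul_sum, hSeq]
      _ ≤ Real.exp (Real.log n * (α - 1)) * Real.exp ((1 - α) * (K * Ln)) := by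
          apply mul_le_mul
          · calc nl⁻¹ ^ (1 - α) = nl ^ (α - 1) := by
                  rw [Real.inv_rpow hnlpos.le, ← Real.rpow_neg hnlpos.le]
                  norm_num
              _ ≤ (n : ℝ) ^ (α - 1) := Real.rpow_le_rpow hnlpos.le hnln (by linarith)
              _ = Real.exp (Real.log n * (α - 1)) := Real.rpow_def_of_pos hnpos _
          · rw [Real.exp_le_exp]
            have h1 : (1 - α) * renyiH μ α t ≤ (1 - α) * (K * t) :=
              mul_le_mul_of_nonpos_left hren (by linarith)
            have h2 : (1 - α) * (K * t) ≤ (1 - α) * (K * Ln) := by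
              have := mul_le_mul_of_nonneg_left htL.le hKpos.le
              nlinarith
            linarith
          · positivity
          · positivity
      _ = Real.exp (Real.log n * (α - 1) + (1 - α) * (K * Ln)) := (Real.exp_add _ _).symm
      _ = Real.exp (-c * Real.log n) := by
          congr 1
          rw [hLn, hKdef, hcdef]
          field_simp
          ring


end
end
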